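/- arXiv:1611.00246 — 2 statements merged into one kernel-verified Lean document; each statement's English description precedes it below -/
import Mathlib

section
/- Let D be a (2,2) digraph whose phylogeny graph P(D) contains a hole H, let W be a set extending H, and let L be the subgraph of the underlying graph U(D) induced by V(H) ∪ W. If L is chordal and xy is an edge of H taken care of by a vertex w ∈ W, then there exists a vertex z on H such that z is adjacent to both x and w in L. -/
open SimpleGraph Walk


/-- The underlying graph of a digraph given by arc relation `A`. -/
def underlyingGraph {V : Type*} (A : V → V → Prop) : SimpleGraph V where
  Adj x y := x ≠ y ∧ (A x y ∨ A y x)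
  symm := by
    constructor
    intro x y ⟨h, h'⟩
    exact ⟨h.symm, h'.symm⟩
  loopless := by
    constructor
    intro x ⟨h, _⟩
    exact h rfl

/-- The competition graph of a digraph given by arc relation `A`. -/
def competitionGraph {V : Type*} (A : V → V → Prop) : SimpleGraph V where
  Adj x y := x ≠ y ∧ ∃ w, A x w ∧ A y w
  symm := by
    constructor
    intro x y ⟨h, w, h1, h2⟩
    exact ⟨h.symm, w, h2, h1⟩
  loopless := by
    constructor
    intro x ⟨h, _⟩
    exact h rfl

/-- The phylogeny graph of a digraph given by arc relation `A`. -/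
def phylogenyGraph {V : Type*} (A : V → V → Prop) : SimpleGraph V :=
  underlyingGraph A ⊔ competitionGraph A

/-- A `(i,j)` digraph: a (finite, simple) acyclic digraph in which every vertex has
indegree at most `i` and outdegree at most `j`. -/
def IsIJDigraph {V : Type*} (i j : ℕ) (A : V → V → Prop) : Prop :=
  (∀ v : V, ¬ Relation.TransGen A v v) ∧
  (∀ v : V, {u | A u v}.ncard ≤ i) ∧
  (∀ v : V, {u | A v u}.ncard ≤ j)

/-- An edge of the phylogeny graph is a *cared edge* if it belongs to the competition
graph but not to the underlying graph. -/
def CaredEdge {V : Type*} (A : V → V → Prop) (x y : V) : Prop :=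
  (competitionGraph A).Adj x y ∧ ¬ (underlyingGraph A).Adj x y

/-- A cycle in a graph is a *hole* if it has length at least `4` and is induced. -/
def IsHole {V : Type*} (G : SimpleGraph V) {v : V} (c : G.Walk v v) : Prop :=
  c.IsCycle ∧ 4 ≤ c.length ∧
    ∀ x ∈ c.support, ∀ y ∈ c.support, G.Adj x y → s(x, y) ∈ c.edges

/-- A graph is *chordal* if every cycle of length at least `4` has a chord, i.e.
the graph has no hole. -/
def IsChordal {V : Type*} (G : SimpleGraph V) : Prop :=
  ∀ (v : V) (c : G.Walk v v), c.IsCycle → 4 ≤ c.length →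
    ∃ x ∈ c.support, ∃ y ∈ c.support, G.Adj x y ∧ s(x, y) ∉ c.edges

/-- Given a hole `c` in the phylogeny graph of a digraph with arc relation `A`,
a set `W` *extends* `c` if every element of `W` takes care of some cared edge of `c`
and every cared edge of `c` is taken care of by some element of `W`. -/
def ExtendingSet {V : Type*} (A : V → V → Prop) {v : V}
    (c : (phylogenyGraph A).Walk v v) (W : Set V) : Prop :=
  (∀ w ∈ W, ∃ x y : V, s(x, y) ∈ c.edges ∧ CaredEdge A x y ∧ A x w ∧ A y w) ∧
  (∀ x y : V, s(x, y) ∈ c.edges → CaredEdge A x y → ∃ w ∈ W, A x w ∧ A y w)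

section AuxLemmas


lemma aux_eq_of_length_zero {V} {G : SimpleGraph V} {a b : V} (p : G.Walk a b)
    (h : p.length = 0) : a = b := by
  cases p with
  | nil => rfl
  | cons hadj q => simp at h

lemma aux_edge_of_length_one {V} {G : SimpleGraph V} {a b : V} (p : G.Walk a b)
    (h : p.length = 1) : s(a, b) ∈ p.edges := by
  cases p with
  | nil => simp at h
  | cons hadj q =>
    have h0 : q.length = 0 := by simpa using h
    have := aux_eq_of_length_zero q h0
    subst this
    simp

lemma aux_two_le_length {V} {G : SimpleGraph V} {a b : V} (m : G.Walk a b)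
    (hab : a ≠ b) (hm : s(a, b) ∉ m.edges) : 2 ≤ m.length := by
  by_contra h
  push_neg at h
  interval_cases hl : m.length
  · exact hab (aux_eq_of_length_zero m hl)
  · exact hm (aux_edge_of_length_one m hl)

lemma aux_snd_of_edge {V} {G : SimpleGraph V} {a b y : V} (p : G.Walk a b)
    (hp : p.IsPath) (h : s(a, y) ∈ p.edges) :
    ∃ (had : G.Adj a y) (q : G.Walk y b), p = Walk.cons had q := by
  cases p with
  | nil => simp at h
  | cons hadj q =>
    rename_i v
    rw [Walk.edges_cons, List.mem_cons] at h
    rcases h with h | h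
    · rw [Sym2.eq_iff] at h
      rcases h with ⟨-, rfl⟩ | ⟨rfl, rfl⟩
      · exact ⟨hadj, q, rfl⟩
      · exact absurd rfl hadj.ne
    · exfalso
      have ha : a ∈ q.support := q.fst_mem_support_of_mem_edges h
      have hnd := hp.support_nodup
      rw [Walk.support_cons, List.nodup_cons] at hnd
      exact hnd.1 ha

lemma aux_loop_path {V} {G : SimpleGraph V} {v : V} (p : G.Walk v v)
    (hp : p.IsPath) : p.length = 0 := by
  cases p with
  | nil => rfl
  | cons hadj q =>
    exfalso
    have := q.end_mem_support
    have hnd := hp.support_nodup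
    rw [Walk.support_cons, List.nodup_cons] at hnd
    exact hnd.1 this

lemma aux_tri {V} {G : SimpleGraph V} {a b w' : V} (q : G.Walk b a) (hq : q.IsPath)
    (hlen : 3 ≤ q.length) (h3 : s(b, w') ∈ q.edges) (h2 : s(a, w') ∈ q.edges) : False := by
  obtain ⟨had, q2, rfl⟩ := aux_snd_of_edge q hq h3
  have hq2 : q2.IsPath := hq.of_cons
  have hlen2 : 2 ≤ q2.length := by
    rw [Walk.length_cons] at hlen; omega
  rw [Walk.edges_cons, List.mem_cons] at h2
  rcases h2 with h2 | h2
  · rw [Sym2.eq_iff] at h2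
    rcases h2 with ⟨rfl, -⟩ | ⟨rfl, rfl⟩
    · have := aux_loop_path _ hq
      omega
    · have := aux_loop_path _ hq2
      omega
  · rw [Sym2.eq_swap] at h2
    obtain ⟨had2, q3, rfl⟩ := aux_snd_of_edge q2 hq2 h2
    have := aux_loop_path _ hq2.of_cons
    rw [Walk.length_cons] at hlen2
    omega

lemma aux_no_triangle {V} {G : SimpleGraph V} {u a b w' : V} (c : G.Walk u u)
    (hc : c.IsCycle) (hlen : 4 ≤ c.length)
    (h1 : s(a, b) ∈ c.edges) (h2 : s(a, w') ∈ c.edges) (h3 : s(b, w') ∈ c.edges) :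
    False := by
  classical
  have hab : a ≠ b := (Walk.adj_of_mem_edges c h1).ne
  have haw : a ≠ w' := (Walk.adj_of_mem_edges c h2).ne
  have hbw : b ≠ w' := (Walk.adj_of_mem_edges c h3).ne
  have ha : a ∈ c.support := c.fst_mem_support_of_mem_edges h1
  obtain ⟨c2, hc2, hmem, hlen2⟩ : ∃ c2 : G.Walk a a, c2.IsCycle ∧
      (∀ e, e ∈ c2.edges ↔ e ∈ c.edges) ∧ c2.length = c.length := by
    refine ⟨c.rotate a ha, hc.rotate ha, fun e => (c.rotate_edges a ha).mem_iff, ?_⟩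
    have e1 := (c.rotate a ha).length_edges
    have e2 := c.length_edges
    have e3 := (c.rotate_edges a ha).perm.length_eq
    omega
  cases c2 with
  | nil => exact hc2.ne_nil rfl
  | cons hadj q =>
    rename_i v
    have hq : q.IsPath := ((Walk.cons_isCycle_iff q hadj).mp hc2).1
    have hfirst : s(a, v) ∉ q.edges := ((Walk.cons_isCycle_iff q hadj).mp hc2).2
    have hqlen : 3 ≤ q.length := by
      rw [Walk.length_cons] at hlen2; omega
    have key : ∀ z, s(a, z) ∈ c.edges → z ≠ v → s(a, z) ∈ q.edges := by
      intro z hz hzv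
      have : s(a, z) ∈ (Walk.cons hadj q).edges := (hmem _).mpr hz
      rw [Walk.edges_cons, List.mem_cons] at this
      rcases this with h | h
      · rw [Sym2.eq_iff] at h
        rcases h with ⟨-, rfl⟩ | ⟨rfl, rfl⟩
        · exact absurd rfl hzv
        · exact absurd rfl (Walk.adj_of_mem_edges c hz).ne
      · exact h
    have h3q : s(b, w') ∈ q.edges := by
      have : s(b, w') ∈ (Walk.cons hadj q).edges := (hmem _).mpr h3
      rw [Walk.edges_cons, List.mem_cons] at this
      rcases this with h | h
      · exfalso
        rw [Sym2.eq_iff] at h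
        rcases h with ⟨h', -⟩ | ⟨-, h'⟩
        · exact hab h'.symm
        · exact haw h'.symm
      · exact h
    by_cases hbv : b = v
    · subst hbv
      have h2q : s(a, w') ∈ q.edges := key w' h2 (fun h => hbw h.symm)
      exact aux_tri q hq hqlen h3q h2q
    · have hbq : s(a, b) ∈ q.edges := key b h1 hbv
      by_cases hwv : w' = v
      · subst hwv
        rw [Sym2.eq_swap] at h3q
        exact aux_tri q hq hqlen h3q hbq
      · have h2q : s(a, w') ∈ q.edges := key w' h2 hwv
        have hqr : q.reverse.IsPath := hq.reverse
        obtain ⟨hadr, r, hr⟩ := aux_snd_of_edge q.reverse hqr (by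
          rw [Walk.edges_reverse, List.mem_reverse]; exact hbq)
        have h2r : s(a, w') ∈ (Walk.cons hadr r).edges := by
          rw [← hr, Walk.edges_reverse, List.mem_reverse]; exact h2q
        rw [Walk.edges_cons, List.mem_cons] at h2r
        rcases h2r with h' | h'
        · rw [Sym2.eq_iff] at h'
          rcases h' with ⟨-, h''⟩ | ⟨h'', -⟩
          · exact hbw h''.symm
          · exact hab h''
        · have haR : a ∈ r.support := r.fst_mem_support_of_mem_edges h'
          have hnd : (Walk.cons hadr r).support.Nodup := by
            rw [← hr]; exact hqr.support_nodup
          rw [Walk.support_cons, List.nodup_cons] at hnd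
          exact hnd.1 haR

lemma aux_card3 {V : Type*} {T : Set V} {a b d : V} (hfin : T.Finite) (hT : T.ncard ≤ 2)
    (ha : a ∈ T) (hb : b ∈ T) (hd : d ∈ T) (hab : a ≠ b) (had : a ≠ d) (hbd : b ≠ d) :
    False := by
  have hsub : ({a, b, d} : Set V) ⊆ T := by
    intro z hz
    rcases hz with rfl | rfl | rfl
    · exact ha
    · exact hb
    · exact hd
  have h3 : ({a, b, d} : Set V).ncard = 3 := by
    rw [Set.ncard_insert_of_notMem (by simp [hab, had])
      ((Set.finite_singleton d).insert b), Set.ncard_pair hbd]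
  have := Set.ncard_le_ncard hsub hfin
  omega

lemma aux_chord_shortcut {V} {M : SimpleGraph V} {t x a b : V}
    (p : M.Walk t x) (hmin : ∀ q : M.Walk t x, p.length ≤ q.length)
    (ha : a ∈ p.support) (hb : b ∈ p.support)
    (hadj : M.Adj a b) (hne : s(a, b) ∉ p.edges) : False := by
  classical
  have hsplit := p.take_spec ha
  have hb' : b ∈ (p.takeUntil a ha).support ∨ b ∈ (p.dropUntil a ha).support := by
    rw [← hsplit, Walk.mem_support_append_iff] at hb
    exact hb
  have hlen : (p.takeUntil a ha).length + (p.dropUntil a ha).length = p.length := by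
    rw [← congrArg Walk.length hsplit, Walk.length_append]
  rcases hb' with hb' | hb'
  · set p1 := p.takeUntil a ha with hp1
    have hsplit2 := p1.take_spec hb'
    have hlen2 : (p1.takeUntil b hb').length + (p1.dropUntil b hb').length = p1.length := by
      rw [← congrArg Walk.length hsplit2, Walk.length_append]
    have hm2 : 2 ≤ (p1.dropUntil b hb').length := by
      refine aux_two_le_length _ (fun h => hadj.ne h.symm) (fun hmem => hne ?_)
      rw [Sym2.eq_swap] at hmem
      exact (p.edges_takeUntil_subset ha) ((p1.edges_dropUntil_subset hb') hmem)
    have := hmin ((p1.takeUntil b hb').append (Walk.cons hadj.symm (p.dropUntil a ha)))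
    rw [Walk.length_append, Walk.length_cons] at this
    omega
  · set p2 := p.dropUntil a ha with hp2
    have hsplit2 := p2.take_spec hb'
    have hlen2 : (p2.takeUntil b hb').length + (p2.dropUntil b hb').length = p2.length := by
      rw [← congrArg Walk.length hsplit2, Walk.length_append]
    have hm2 : 2 ≤ (p2.takeUntil b hb').length := by
      refine aux_two_le_length _ hadj.ne (fun hmem => hne ?_)
      exact (p.edges_dropUntil_subset ha) ((p2.edges_takeUntil_subset hb') hmem)
    have := hmin ((p.takeUntil a ha).append (Walk.cons hadj (p2.dropUntil b hb')))
    rw [Walk.length_append, Walk.length_cons] at this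
    omega

def auxM {V : Type*} (U : SimpleGraph V) (S : Set V) (w : V) : SimpleGraph V where
  Adj a b := U.Adj a b ∧ a ∈ S ∧ b ∈ S ∧ a ≠ w ∧ b ≠ w
  symm := by
    constructor
    intro a b ⟨h, h1, h2, h3, h4⟩
    exact ⟨h.symm, h2, h1, h4, h3⟩
  loopless := by
    constructor
    intro a ⟨h, _⟩
    exact U.loopless.irrefl a h

def liftW {V : Type*} {G G' : SimpleGraph V} {s : Set V}
    (hle : ∀ ⦃a b⦄, G.Adj a b → G'.Adj a b) :
    ∀ {a b : V} (p : G.Walk a b), (∀ v ∈ p.support, v ∈ s) →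
      (ha : a ∈ s) → (hb : b ∈ s) → (G'.induce s).Walk ⟨a, ha⟩ ⟨b, hb⟩
  | _, _, Walk.nil, _, _, _ => Walk.nil
  | a, b, Walk.cons h p, hs, ha, hb =>
    Walk.cons (by simpa using hle h)
      (liftW hle p (fun z hz => hs z (by rw [Walk.support_cons]; exact List.mem_cons_of_mem _ hz))
        (hs _ (by rw [Walk.support_cons]; exact List.mem_cons_of_mem _ p.start_mem_support)) hb)

lemma liftW_support {V : Type*} {G G' : SimpleGraph V} {s : Set V}
    (hle : ∀ ⦃a b⦄, G.Adj a b → G'.Adj a b) :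
    ∀ {a b : V} (p : G.Walk a b) (hs : ∀ v ∈ p.support, v ∈ s) (ha : a ∈ s) (hb : b ∈ s),
      (liftW hle p hs ha hb).support.map Subtype.val = p.support
  | _, _, Walk.nil, _, _, _ => by simp [liftW]
  | a, b, Walk.cons h p, hs, ha, hb => by
    simp [liftW, liftW_support hle p]

lemma liftW_edges {V : Type*} {G G' : SimpleGraph V} {s : Set V}
    (hle : ∀ ⦃a b⦄, G.Adj a b → G'.Adj a b) :
    ∀ {a b : V} (p : G.Walk a b) (hs : ∀ v ∈ p.support, v ∈ s) (ha : a ∈ s) (hb : b ∈ s),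
      (liftW hle p hs ha hb).edges.map (Sym2.map Subtype.val) = p.edges
  | _, _, Walk.nil, _, _, _ => by simp [liftW]
  | a, b, Walk.cons h p, hs, ha, hb => by
    simp [liftW, liftW_edges hle p]

lemma liftW_length {V : Type*} {G G' : SimpleGraph V} {s : Set V}
    (hle : ∀ ⦃a b⦄, G.Adj a b → G'.Adj a b) :
    ∀ {a b : V} (p : G.Walk a b) (hs : ∀ v ∈ p.support, v ∈ s) (ha : a ∈ s) (hb : b ∈ s),
      (liftW hle p hs ha hb).length = p.length
  | _, _, Walk.nil, _, _, _ => by simp [liftW]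
  | a, b, Walk.cons h p, hs, ha, hb => by
    simp [liftW, liftW_length hle p]

end AuxLemmas


/-- Let `D` be a `(2,2)` digraph whose phylogeny graph contains a hole `H`, let `W` be
a set extending `H`, and let `L` be the subgraph of the underlying graph of `D` induced
by `V(H) ∪ W`. If `L` is chordal and `xy` is an edge of `H` taken care of by `w ∈ W`,
then there is a vertex `z` on `H` adjacent to both `x` and `w` in `L` (equivalently,
in the underlying graph of `D`, since `L` is an induced subgraph containing them). -/
theorem stmt_13 {V : Type*} [Fintype V] (A : V → V → Prop)
    (hD : IsIJDigraph 2 2 A)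
    (u : V) (c : (phylogenyGraph A).Walk u u) (hH : IsHole (phylogenyGraph A) c)
    (W : Set V) (hW : ExtendingSet A c W)
    (hL : IsChordal ((underlyingGraph A).induce ({x | x ∈ c.support} ∪ W)))
    (x y : V) (hxy : s(x, y) ∈ c.edges) (hcared : CaredEdge A x y)
    (w : V) (hw : w ∈ W) (hxw : A x w) (hyw : A y w) :
    ∃ z ∈ c.support, (underlyingGraph A).Adj z x ∧ (underlyingGraph A).Adj z w := by
  classical
  obtain ⟨hacyc, hin, hout⟩ := hD
  obtain ⟨hcyc, hclen, hind⟩ := hH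
  set S : Set V := {x | x ∈ c.support} ∪ W with hSdef
  have arc_ne : ∀ {a b : V}, A a b → a ≠ b := by
    intro a b hab heq
    exact hacyc b (Relation.TransGen.single (heq ▸ hab))
  have hxny : x ≠ y := hcared.1.1
  have hxs : x ∈ c.support := c.fst_mem_support_of_mem_edges hxy
  have hys : y ∈ c.support := c.snd_mem_support_of_mem_edges hxy
  have care_not_support : ∀ (w' a b : V), s(a, b) ∈ c.edges → A a w' → A b w' →
      w' ∉ c.support := by
    intro w' a b he ha hb hws
    have hasup : a ∈ c.support := c.fst_mem_support_of_mem_edges he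
    have hbsup : b ∈ c.support := c.snd_mem_support_of_mem_edges he
    have hP1 : (phylogenyGraph A).Adj a w' := Or.inl ⟨arc_ne ha, Or.inl ha⟩
    have hP2 : (phylogenyGraph A).Adj b w' := Or.inl ⟨arc_ne hb, Or.inl hb⟩
    have he1 : s(a, w') ∈ c.edges := hind a hasup w' hws hP1
    have he2 : s(b, w') ∈ c.edges := hind b hbsup w' hws hP2
    exact aux_no_triangle c hcyc hclen he he1 he2
  have hWns : ∀ w' ∈ W, w' ∉ c.support := by
    intro w' hw' hws
    obtain ⟨a, b, he, hcab, ha, hb⟩ := hW.1 w' hw'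
    exact care_not_support w' a b he ha hb hws
  have hwns : w ∉ c.support := hWns w hw
  have in_w : ∀ z, A z w → z = x ∨ z = y := by
    intro z hz
    by_contra hcon
    push_neg at hcon
    exact aux_card3 (Set.toFinite _) (hin w) hxw hyw hz hxny
      (fun h => hcon.1 h.symm) (fun h => hcon.2 h.symm)
  have hUwx : (underlyingGraph A).Adj w x := ⟨(arc_ne hxw).symm, Or.inr hxw⟩
  have hUwy : (underlyingGraph A).Adj w y := ⟨(arc_ne hyw).symm, Or.inr hyw⟩
  have hxS : x ∈ S := Set.mem_union_left _ hxs
  have hyS : y ∈ S := Set.mem_union_left _ hys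
  have hwS : w ∈ S := Set.mem_union_right _ hw
  have noWadjw : ∀ w' ∈ W, ¬ (underlyingGraph A).Adj w w' := by
    rintro w' hw' ⟨hne, harc⟩
    rcases harc with h | h
    · obtain ⟨a, b, he, hcab, ha, hb⟩ := hW.1 w' hw'
      have hasup : a ∈ c.support := c.fst_mem_support_of_mem_edges he
      have hbsup : b ∈ c.support := c.snd_mem_support_of_mem_edges he
      have hab : a ≠ b := hcab.1.1
      exact aux_card3 (Set.toFinite _) (hin w') ha hb h hab
        (fun e => hwns (e ▸ hasup)) (fun e => hwns (e ▸ hbsup))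
    · rcases in_w w' h with rfl | rfl
      · exact hWns _ hw' hxs
      · exact hWns _ hw' hys
  -- Step A: a walk in P from y to x avoiding the edge s(x,y)
  obtain ⟨p0, hp0sub, hp0no⟩ : ∃ p0 : (phylogenyGraph A).Walk y x,
      (∀ e ∈ p0.edges, e ∈ c.edges) ∧ s(x, y) ∉ p0.edges := by
    obtain ⟨c2, hc2, hmem, hlen2⟩ : ∃ c2 : (phylogenyGraph A).Walk x x, c2.IsCycle ∧
        (∀ e, e ∈ c2.edges ↔ e ∈ c.edges) ∧ c2.length = c.length := by
      refine ⟨c.rotate x hxs, hcyc.rotate hxs, fun e => (c.rotate_edges x hxs).mem_iff, ?_⟩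
      have e1 := (c.rotate x hxs).length_edges
      have e2 := c.length_edges
      have e3 := (c.rotate_edges x hxs).perm.length_eq
      omega
    cases c2 with
    | nil => exact absurd rfl hc2.ne_nil
    | cons hadj q =>
      rename_i v
      have hq : q.IsPath := ((Walk.cons_isCycle_iff q hadj).mp hc2).1
      have hfirst : s(x, v) ∉ q.edges := ((Walk.cons_isCycle_iff q hadj).mp hc2).2
      have hxyc2 : s(x, y) ∈ (Walk.cons hadj q).edges := (hmem _).mpr hxy
      rw [Walk.edges_cons, List.mem_cons] at hxyc2
      rcases hxyc2 with h | h
      · rw [Sym2.eq_iff] at h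
        rcases h with ⟨-, hyv⟩ | ⟨hxv, hyx⟩
        · subst hyv
          refine ⟨q, ?_, ?_⟩
          · intro e he
            exact (hmem e).mp (by rw [Walk.edges_cons]; exact List.mem_cons_of_mem _ he)
          · exact hfirst
        · exact absurd hyx.symm hxny
      · have hqr : q.reverse.IsPath := hq.reverse
        obtain ⟨had, r, hr⟩ := aux_snd_of_edge q.reverse hqr (by
          rw [Walk.edges_reverse, List.mem_reverse]; exact h)
        refine ⟨r.append (Walk.cons hadj.symm Walk.nil), ?_, ?_⟩
        · intro e he
          rw [Walk.edges_append] at he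
          rcases List.mem_append.mp he with he' | he'
          · have : e ∈ q.reverse.edges := by
              rw [hr, Walk.edges_cons]; exact List.mem_cons_of_mem _ he'
            rw [Walk.edges_reverse, List.mem_reverse] at this
            exact (hmem e).mp (by rw [Walk.edges_cons]; exact List.mem_cons_of_mem _ this)
          · simp only [Walk.edges_cons, Walk.edges_nil, List.mem_singleton] at he'
            subst he'
            refine (hmem _).mp ?_
            rw [Walk.edges_cons, Sym2.eq_swap]
            exact List.mem_cons_self
        · intro hmem'
          rw [Walk.edges_append] at hmem'
          rcases List.mem_append.mp hmem' with hm | hm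
          · have hnd : q.reverse.edges.Nodup := by
              have := hqr.isTrail
              rwa [Walk.isTrail_def] at this
            rw [hr, Walk.edges_cons, List.nodup_cons] at hnd
            exact hnd.1 hm
          · simp only [Walk.edges_cons, Walk.edges_nil, List.mem_singleton] at hm
            rw [Sym2.eq_iff] at hm
            rcases hm with ⟨hxv, hyx⟩ | ⟨-, hyv⟩
            · exact hxny hyx.symm
            · exact hfirst (hyv ▸ h)
  set M : SimpleGraph V := auxM (underlyingGraph A) S w with hMdef
  have hMadj : ∀ {a b : V}, (underlyingGraph A).Adj a b → a ∈ S → b ∈ S → a ≠ w → b ≠ w → M.Adj a b :=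
    fun h h1 h2 h3 h4 => ⟨h, h1, h2, h3, h4⟩
  have hMle : ∀ ⦃a b : V⦄, M.Adj a b → (underlyingGraph A).Adj a b := fun a b h => h.1
  have conv : ∀ (a b : V) (p : (phylogenyGraph A).Walk a b), (∀ e ∈ p.edges, e ∈ c.edges) →
      s(x, y) ∉ p.edges → M.Reachable a b := by
    intro a b p
    induction p with
    | nil => intro _ _; exact Reachable.refl _
    | @cons a' v' b' h q ih =>
      intro hsub hno
      have he : s(a', v') ∈ c.edges := hsub _ (by
        rw [Walk.edges_cons]; exact List.mem_cons_self)
      have hnexy : s(a', v') ≠ s(x, y) := by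
        intro hcontra
        exact hno (by rw [Walk.edges_cons, ← hcontra]; exact List.mem_cons_self)
      have hasup : a' ∈ c.support := c.fst_mem_support_of_mem_edges he
      have hvsup : v' ∈ c.support := c.snd_mem_support_of_mem_edges he
      have hanw : a' ≠ w := fun e => hwns (e ▸ hasup)
      have hvnw : v' ≠ w := fun e => hwns (e ▸ hvsup)
      have step : M.Reachable a' v' := by
        by_cases hUav : (underlyingGraph A).Adj a' v'
        · exact (hMadj hUav (Set.mem_union_left _ hasup) (Set.mem_union_left _ hvsup)
            hanw hvnw).reachable
        · have hCadj : (competitionGraph A).Adj a' v' := by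
            rcases h with h' | h'
            · exact absurd h' hUav
            · exact h'
          obtain ⟨w'', hw''W, haw'', hvw''⟩ := hW.2 a' v' he ⟨hCadj, hUav⟩
          have hw''ne : w'' ≠ w := by
            intro heq
            subst heq
            rcases in_w a' haw'' with rfl | rfl <;> rcases in_w v' hvw'' with rfl | rfl
            · exact hCadj.ne rfl
            · exact hnexy rfl
            · exact hnexy (Sym2.eq_swap)
            · exact hCadj.ne rfl
          have r1 : M.Adj a' w'' := hMadj ⟨arc_ne haw'', Or.inl haw''⟩
            (Set.mem_union_left _ hasup) (Set.mem_union_right _ hw''W) hanw hw''ne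
          have r2 : M.Adj w'' v' := hMadj ⟨(arc_ne hvw'').symm, Or.inr hvw''⟩
            (Set.mem_union_right _ hw''W) (Set.mem_union_left _ hvsup) hw''ne hvnw
          exact r1.reachable.trans r2.reachable
      refine step.trans (ih ?_ ?_)
      · intro e he'
        exact hsub e (by rw [Walk.edges_cons]; exact List.mem_cons_of_mem _ he')
      · intro hc'
        exact hno (by rw [Walk.edges_cons]; exact List.mem_cons_of_mem _ hc')
  have hreach : M.Reachable y x := conv y x p0 hp0sub hp0no
  have Msupp : ∀ (a b : V) (p : M.Walk a b), a ∈ S → a ≠ w →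
      ∀ v ∈ p.support, v ∈ S ∧ v ≠ w := by
    intro a b p
    induction p with
    | nil =>
      intro h1 h2 v hv
      rw [Walk.support_nil, List.mem_singleton] at hv
      subst hv
      exact ⟨h1, h2⟩
    | @cons a' v' b' h q ih =>
      intro h1 h2 v hv
      rw [Walk.support_cons, List.mem_cons] at hv
      rcases hv with rfl | hv
      · exact ⟨h1, h2⟩
      · exact ih h.2.2.1 h.2.2.2.2 v hv
  have key : ∀ (d : ℕ) (t : V), t ∈ c.support → (underlyingGraph A).Adj w t → t ≠ x → M.Reachable t x →
      M.dist t x ≤ d → ∃ z ∈ c.support, (underlyingGraph A).Adj z x ∧ (underlyingGraph A).Adj z w := by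
    intro d
    induction d with
    | zero =>
      intro t ht hwt htx hr hd
      exfalso
      obtain ⟨p, hp, hplen⟩ := hr.exists_path_of_dist
      exact htx (aux_eq_of_length_zero p (by omega))
    | succ d ih =>
      intro t ht hwt htx hr hd
      obtain ⟨p, hp, hplen⟩ := hr.exists_path_of_dist
      have hmin : ∀ q : M.Walk t x, p.length ≤ q.length := fun q => by
        rw [hplen]; exact SimpleGraph.dist_le q
      have hplen1 : 1 ≤ p.length := by
        rcases Nat.eq_zero_or_pos p.length with h0 | h0
        · exact absurd (aux_eq_of_length_zero p h0) htx
        · exact h0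
      by_cases hone : p.length = 1
      · have hadjtx : M.Adj t x := Walk.adj_of_mem_edges p (aux_edge_of_length_one p hone)
        exact ⟨t, ht, hadjtx.1, hwt.symm⟩
      · have hp2 : 2 ≤ p.length := by omega
        have htS : t ∈ S := Set.mem_union_left _ ht
        have htnw : t ≠ w := hwt.ne'
        have hsupS := Msupp t x p htS htnw
        have hwnp : w ∉ p.support := fun hc' => (hsupS w hc').2 rfl
        set pl := liftW hMle p (fun v hv => (hsupS v hv).1) htS hxS with hpl
        have hLwt : ((underlyingGraph A).induce S).Adj ⟨w, hwS⟩ ⟨t, htS⟩ := by simpa using hwt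
        have hLxw : ((underlyingGraph A).induce S).Adj ⟨x, hxS⟩ ⟨w, hwS⟩ := by simpa using hUwx.symm
        set Q := pl.append (Walk.cons hLxw Walk.nil) with hQdef
        set C := Walk.cons hLwt Q with hCdef
        have hplsup := liftW_support hMle p (fun v hv => (hsupS v hv).1) htS hxS
        have hpledges := liftW_edges hMle p (fun v hv => (hsupS v hv).1) htS hxS
        have hpllen := liftW_length hMle p (fun v hv => (hsupS v hv).1) htS hxS
        have hplnodup : pl.support.Nodup := by
          have := hp.support_nodup
          rw [← hplsup] at this
          exact this.of_map _
        have hwnpl : (⟨w, hwS⟩ : {v // v ∈ S}) ∉ pl.support := by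
          intro hc'
          exact hwnp (by rw [← hplsup]; exact List.mem_map_of_mem hc')
        have hQsup : Q.support = pl.support ++ [⟨w, hwS⟩] := by
          rw [hQdef, Walk.support_append]
          simp
        have hQpath : Q.IsPath := by
          rw [Walk.isPath_def, hQsup]
          simp [List.nodup_append, hplnodup, hwnpl]
          intro a b hab hEq
          subst hEq
          exact hwnpl hab
        have hfirstQ : s((⟨w, hwS⟩ : {v // v ∈ S}), ⟨t, htS⟩) ∉ Q.edges := by
          rw [hQdef, Walk.edges_append]
          intro hc'
          rcases List.mem_append.mp hc' with hm | hm
          · apply hwnp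
            have hmm : Sym2.map Subtype.val s((⟨w, hwS⟩ : {v // v ∈ S}), ⟨t, htS⟩)
                ∈ pl.edges.map (Sym2.map Subtype.val) := List.mem_map_of_mem hm
            rw [hpledges] at hmm
            simp only [Sym2.map_pair_eq] at hmm
            exact p.fst_mem_support_of_mem_edges hmm
          · simp only [Walk.edges_cons, Walk.edges_nil, List.mem_singleton] at hm
            rw [Sym2.eq_iff] at hm
            rcases hm with ⟨h1, h2⟩ | ⟨h1, h2⟩
            · exact hUwx.ne (congrArg Subtype.val h1)
            · exact htx (congrArg Subtype.val h2)
        have hCcyc : C.IsCycle := by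
          rw [hCdef, Walk.cons_isCycle_iff]
          exact ⟨hQpath, hfirstQ⟩
        have hClen : 4 ≤ C.length := by
          rw [hCdef, hQdef, Walk.length_cons, Walk.length_append, Walk.length_cons,
            Walk.length_nil, hpllen]
          omega
        obtain ⟨x', hx', y', hy', hadj', hnot'⟩ := hL _ C hCcyc hClen
        have hCsup : C.support = ⟨w, hwS⟩ :: (pl.support ++ [⟨w, hwS⟩]) := by
          rw [hCdef, Walk.support_cons, hQsup]
        have hCedges : C.edges =
            s((⟨w, hwS⟩ : {v // v ∈ S}), ⟨t, htS⟩) ::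
              (pl.edges ++ [s((⟨x, hxS⟩ : {v // v ∈ S}), ⟨w, hwS⟩)]) := by
          rw [hCdef, hQdef, Walk.edges_cons, Walk.edges_append, Walk.edges_cons,
            Walk.edges_nil]
        have hmemC : ∀ z' : {v // v ∈ S}, z' ∈ C.support →
            z' = ⟨w, hwS⟩ ∨ z'.val ∈ p.support := by
          intro z' hz'
          rw [hCsup] at hz'
          rcases List.mem_cons.mp hz' with rfl | hz'
          · exact Or.inl rfl
          · rcases List.mem_append.mp hz' with hz' | hz'
            · right
              rw [← hplsup]
              exact List.mem_map_of_mem hz'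
            · rw [List.mem_singleton] at hz'
              exact Or.inl hz'
        have hUval : (underlyingGraph A).Adj x'.val y'.val := by simpa using hadj'
        have handle : ∀ (x'' y'' : {v // v ∈ S}), ((underlyingGraph A).induce S).Adj x'' y'' →
            s(x'', y'') ∉ C.edges → x'' = ⟨w, hwS⟩ → y''.val ∈ p.support →
            ∃ z ∈ c.support, (underlyingGraph A).Adj z x ∧ (underlyingGraph A).Adj z w := by
          intro x'' y'' hadj'' hnot'' hx'' hy''
          have hUwb : (underlyingGraph A).Adj w y''.val := by
            have h' : (underlyingGraph A).Adj x''.val y''.val := by simpa using hadj''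
            rwa [hx''] at h'
          have hbW : y''.val ∉ W := fun hc' => noWadjw _ hc' hUwb
          have hbsup : y''.val ∈ c.support := by
            rcases (hsupS _ hy'').1 with h' | h'
            · exact h'
            · exact absurd h' hbW
          have hbx : y''.val ≠ x := by
            intro heq
            apply hnot''
            rw [hCedges, hx'']
            have : y'' = ⟨x, hxS⟩ := Subtype.ext heq
            rw [this]
            exact List.mem_cons_of_mem _ (List.mem_append.mpr (Or.inr
              (List.mem_singleton.mpr Sym2.eq_swap)))
          have hbt : y''.val ≠ t := by
            intro heq
            apply hnot''
            rw [hCedges, hx'']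
            have : y'' = ⟨t, htS⟩ := Subtype.ext heq
            rw [this]
            exact List.mem_cons_self
          have hbp : y''.val ∈ p.support := hy''
          have hdistb : M.dist y''.val x ≤ d := by
            have h1 : (p.takeUntil _ hbp).length + (p.dropUntil _ hbp).length = p.length := by
              rw [← congrArg Walk.length (p.take_spec hbp), Walk.length_append]
            have h2 : 1 ≤ (p.takeUntil _ hbp).length := by
              rcases Nat.eq_zero_or_pos (p.takeUntil _ hbp).length with h0 | h0
              · exact absurd (aux_eq_of_length_zero _ h0).symm hbt
              · exact h0
            have h3 := SimpleGraph.dist_le (p.dropUntil _ hbp)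
            omega
          exact ih y''.val hbsup hUwb hbx ⟨p.dropUntil _ hbp⟩ hdistb
        rcases hmemC x' hx' with hx'w | hx'p <;> rcases hmemC y' hy' with hy'w | hy'p
        · exact absurd (hx'w.trans hy'w.symm) hadj'.ne
        · exact handle x' y' hadj' hnot' hx'w hy'p
        · exact handle y' x' hadj'.symm (by rw [Sym2.eq_swap]; exact hnot') hy'w hx'p
        · exfalso
          have hMab : M.Adj x'.val y'.val := hMadj hUval (hsupS _ hx'p).1 (hsupS _ hy'p).1
            (hsupS _ hx'p).2 (hsupS _ hy'p).2
          have hsab : s(x'.val, y'.val) ∉ p.edges := by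
            intro hmem''
            rw [← hpledges] at hmem''
            obtain ⟨e, he, heq⟩ := List.mem_map.mp hmem''
            have hee : e = s(x', y') := by
              apply Sym2.map.injective Subtype.val_injective
              rw [heq]
              simp [Sym2.map_pair_eq]
            apply hnot'
            rw [hCedges]
            exact List.mem_cons_of_mem _ (List.mem_append.mpr (Or.inl (hee ▸ he)))
          exact aux_chord_shortcut p hmin hx'p hy'p hMab hsab
  exact key (M.dist y x) y hys hUwy hxny.symm hreach le_rfl
end

section
/- Let D be a (2,2) digraph and let H be a hole of the phylogeny graph P(D) of D. Then there exists a hole in the underlying graph U(D) of D such that: if H is itself a hole in U(D), this hole equals H; otherwise, this hole contains only vertices of V(H) ∪ W, where W is a set extending H. -/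
namespace Stmt14

open SimpleGraph

set_option linter.unusedSectionVars false

variable {V : Type*} [Fintype V] {A : V → V → Prop}

/-! ### Basic digraph lemmas -/

lemma acyc_irrefl (hD : IsIJDigraph 2 2 A) (x : V) : ¬ A x x :=
  fun h => hD.1 x (Relation.TransGen.single h)

lemma acyc_asymm (hD : IsIJDigraph 2 2 A) {x y : V} (h1 : A x y) (h2 : A y x) : False :=
  hD.1 x ((Relation.TransGen.single h1).trans (Relation.TransGen.single h2))

lemma acyc3 (hD : IsIJDigraph 2 2 A) {x y z : V} (h1 : A x y) (h2 : A y z) (h3 : A z x) :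
    False :=
  hD.1 x (((Relation.TransGen.single h1).trans (Relation.TransGen.single h2)).trans
    (Relation.TransGen.single h3))

lemma arc_ne (hD : IsIJDigraph 2 2 A) {x y : V} (h : A x y) : x ≠ y := by
  rintro rfl; exact acyc_irrefl hD x h

lemma three_distinct_ncard {s : Set V} {a b c : V} (ha : a ∈ s) (hb : b ∈ s) (hc : c ∈ s)
    (hab : a ≠ b) (hac : a ≠ c) (hbc : b ≠ c) : ¬ s.ncard ≤ 2 := by
  intro hle
  have hsub : ({a, b, c} : Set V) ⊆ s := by
    intro t ht; rcases ht with rfl | rfl | rfl <;> simpa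
  have h3 : ({a, b, c} : Set V).ncard = 3 := by
    rw [Set.ncard_insert_of_notMem (by simp [hab, hac]) (Set.toFinite _),
      Set.ncard_insert_of_notMem (by simp [hbc]) (Set.toFinite _), Set.ncard_singleton]
  have := Set.ncard_le_ncard hsub (Set.toFinite s)
  omega

lemma threeIn (hD : IsIJDigraph 2 2 A) {a b c v : V} (ha : A a v) (hb : A b v) (hc : A c v)
    (hab : a ≠ b) (hac : a ≠ c) (hbc : b ≠ c) : False :=
  three_distinct_ncard (s := {u | A u v}) ha hb hc hab hac hbc (hD.2.1 v)

lemma threeOut (hD : IsIJDigraph 2 2 A) {a b c v : V} (ha : A v a) (hb : A v b) (hc : A v c)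
    (hab : a ≠ b) (hac : a ≠ c) (hbc : b ≠ c) : False :=
  three_distinct_ncard (s := {u | A v u}) ha hb hc hab hac hbc (hD.2.2 v)

lemma U_adj_iff {x y : V} : (underlyingGraph A).Adj x y ↔ x ≠ y ∧ (A x y ∨ A y x) := Iff.rfl

lemma U_of_arc (hD : IsIJDigraph 2 2 A) {x y : V} (h : A x y) : (underlyingGraph A).Adj x y :=
  ⟨arc_ne hD h, Or.inl h⟩

lemma P_of_U {x y : V} (h : (underlyingGraph A).Adj x y) : (phylogenyGraph A).Adj x y :=
  Or.inl h

lemma P_of_comp {x y : V} (h : (competitionGraph A).Adj x y) : (phylogenyGraph A).Adj x y :=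
  Or.inr h

lemma caredEdge_symm {x y : V} (h : CaredEdge A x y) : CaredEdge A y x :=
  ⟨h.1.symm, fun h' => h.2 h'.symm⟩

/-! ### Generic walk lemmas -/

section WalkLemmas

variable {G : SimpleGraph V} [DecidableEq V]

lemma start_mem_support_tail {z : V} (c : G.Walk z z) (hc : ¬ c.Nil) :
    z ∈ c.support.tail := by
  cases c with
  | nil => simp at hc
  | cons h p => simpa using p.end_mem_support

lemma mem_support_tail_iff {z : V} (c : G.Walk z z) (hc : ¬ c.Nil) (v : V) :
    v ∈ c.support ↔ v ∈ c.support.tail := by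
  constructor
  · intro hv
    rw [c.support_eq_cons] at hv
    rcases List.mem_cons.mp hv with rfl | hv
    · exact start_mem_support_tail c hc
    · exact hv
  · intro hv
    exact List.mem_of_mem_tail hv

lemma mem_support_rotate_iff {z x v : V} (c : G.Walk z z) (hc : c.IsCycle)
    (hx : x ∈ c.support) : v ∈ (c.rotate _ hx).support ↔ v ∈ c.support := by
  have h1 : ¬ c.Nil := hc.not_nil
  have h2 : ¬ (c.rotate _ hx).Nil := (hc.rotate hx).not_nil
  rw [mem_support_tail_iff _ h2, mem_support_tail_iff _ h1]
  exact (Walk.support_rotate c _ hx).mem_iff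

lemma mem_edges_rotate_iff {z x : V} (c : G.Walk z z) (hx : x ∈ c.support) (e : Sym2 V) :
    e ∈ (c.rotate _ hx).edges ↔ e ∈ c.edges :=
  (Walk.rotate_edges c _ hx).perm.mem_iff

lemma length_rotate {z x : V} (c : G.Walk z z) (hx : x ∈ c.support) :
    (c.rotate _ hx).length = c.length := by
  rw [← Walk.length_edges, ← Walk.length_edges]
  exact (Walk.rotate_edges c _ hx).perm.length_eq

/-- In a path, an edge at the initial vertex goes to a unique second vertex. -/
lemma path_edge_start {a b w : V} {p : G.Walk a b} (hp : p.IsPath)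
    (h : s(a, w) ∈ p.edges) : ∃ (h' : G.Adj a w) (q : G.Walk w b), p = Walk.cons h' q := by
  cases p with
  | nil => simp at h
  | @cons a c b h' p =>
    rw [Walk.edges_cons, List.mem_cons] at h
    have hasupp : a ∉ p.support := by
      have := hp.support_nodup
      rw [Walk.support_cons] at this
      exact (List.nodup_cons.mp this).1
    rcases h with h | h
    · rw [Sym2.eq_iff] at h
      rcases h with ⟨-, rfl⟩ | ⟨rfl, rfl⟩
      · exact ⟨h', p, rfl⟩
      · exact ⟨h', p, rfl⟩
    · exact absurd (Walk.fst_mem_support_of_mem_edges p h) hasupp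

/-- In a path, there is at most one edge at the initial vertex. -/
lemma path_edge_start_unique {a b w w' : V} {p : G.Walk a b} (hp : p.IsPath)
    (h1 : s(a, w) ∈ p.edges) (h2 : s(a, w') ∈ p.edges) : w = w' := by
  obtain ⟨hadj, q, rfl⟩ := path_edge_start hp h1
  rw [Walk.edges_cons, List.mem_cons] at h2
  have hasupp : a ∉ q.support := by
    have := hp.support_nodup
    rw [Walk.support_cons] at this
    exact (List.nodup_cons.mp this).1
  rcases h2 with h2 | h2
  · rw [Sym2.eq_iff] at h2
    rcases h2 with ⟨-, h⟩ | ⟨h1, h2⟩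
    · exact h.symm
    · rw [h2, ← h1]
  · exact absurd (Walk.fst_mem_support_of_mem_edges q h2) hasupp

/-- In a path, there is at most one edge at the final vertex. -/
lemma path_edge_endpoint {a b z z' : V} {p : G.Walk a b} (hp : p.IsPath)
    (h1 : s(z, b) ∈ p.edges) (h2 : s(z', b) ∈ p.edges) : z = z' := by
  have h1' : s(b, z) ∈ p.reverse.edges := by
    rw [Walk.edges_reverse, List.mem_reverse, Sym2.eq_swap]; exact h1
  have h2' : s(b, z') ∈ p.reverse.edges := by
    rw [Walk.edges_reverse, List.mem_reverse, Sym2.eq_swap]; exact h2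
  exact path_edge_start_unique hp.reverse h1' h2'

/-- In a path, an edge joining the two endpoints forces length one. -/
lemma path_endpoints_edge {a b : V} {p : G.Walk a b} (hp : p.IsPath)
    (h : s(a, b) ∈ p.edges) : p.length = 1 := by
  obtain ⟨hadj, q, rfl⟩ := path_edge_start hp h
  have : q.IsPath := hp.of_cons
  cases q with
  | nil => simp
  | cons h' p' =>
    exfalso
    have hnd := this.support_nodup
    rw [Walk.support_cons] at hnd
    exact (List.nodup_cons.mp hnd).1 p'.end_mem_support

/-- Any nonnil walk has an edge at its final endpoint. -/
lemma exists_edge_endpoint {a b : V} (p : G.Walk a b) (hp : ¬ p.Nil) :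
    ∃ z, s(z, b) ∈ p.edges := by
  induction p with
  | nil => simp at hp
  | @cons a c b h p ih =>
    cases p with
    | nil => exact ⟨a, by simp⟩
    | cons h' p' =>
      obtain ⟨z, hz⟩ := ih (by simp)
      exact ⟨z, by rw [Walk.edges_cons]; exact List.mem_cons_of_mem _ hz⟩

lemma sym2_ne {a b e f : V} (h : a = e → b = f → False) (h' : a = f → b = e → False) :
    s(a, b) ≠ s(e, f) := by
  intro hmem
  rw [Sym2.eq_iff] at hmem
  rcases hmem with ⟨h1, h2⟩ | ⟨h1, h2⟩
  · exact h h1 h2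
  · exact h' h1 h2

/-- A walk of length one consists of the single edge between its endpoints. -/
lemma length_one_edge {a b : V} (w : G.Walk a b) (h : w.length = 1) : s(a, b) ∈ w.edges := by
  cases w with
  | nil => simp at h
  | cons hadj q =>
    cases q with
    | nil => simp
    | cons h' q' => simp [Walk.length_cons] at h

/-- Each vertex of a cycle has exactly two neighbours along the cycle. -/
lemma two_nbrs {z x : V} {c : G.Walk z z} (hc : c.IsCycle) (hx : x ∈ c.support) :
    ∃ d₁ d₂ : V, d₁ ≠ d₂ ∧ ∀ w, s(x, w) ∈ c.edges ↔ (w = d₁ ∨ w = d₂) := by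
  classical
  have hrot : (c.rotate _ hx).IsCycle := hc.rotate hx
  have hnotnil : ¬ (c.rotate _ hx).Nil := hrot.not_nil
  obtain ⟨s₀, h₀, p, hps⟩ := Walk.not_nil_iff.mp hnotnil
  have hcyc' : (Walk.cons h₀ p).IsCycle := hps ▸ hrot
  obtain ⟨hpath, hfe⟩ := (Walk.cons_isCycle_iff p h₀).mp hcyc'
  have h3 : 3 ≤ (Walk.cons h₀ p).length := hcyc'.three_le_length
  rw [Walk.length_cons] at h3
  have hpnil : ¬ p.Nil := by rw [Walk.not_nil_iff_lt_length]; omega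
  obtain ⟨pen, hpen⟩ := exists_edge_endpoint p hpnil
  refine ⟨s₀, pen, ?_, ?_⟩
  · rintro rfl
    have := path_endpoints_edge hpath hpen
    omega
  · intro w
    have hmem : s(x, w) ∈ c.edges ↔ s(x, w) ∈ (Walk.cons h₀ p).edges := by
      rw [← hps]; exact (mem_edges_rotate_iff c hx _).symm
    rw [hmem, Walk.edges_cons, List.mem_cons]
    constructor
    · rintro (h | h)
      · rw [Sym2.eq_iff] at h
        rcases h with ⟨-, h⟩ | ⟨h1, h2⟩
        · exact Or.inl h
        · exact Or.inl (h2.trans h1)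
      · exact Or.inr (path_edge_endpoint hpath (Sym2.eq_swap ▸ h) hpen)
    · rintro (rfl | rfl)
      · exact Or.inl rfl
      · exact Or.inr (Sym2.eq_swap ▸ hpen)

/-- A support subset closed under the edges of a walk contains all of the support. -/
lemma spread {T : Set V} {E : List (Sym2 V)}
    (hT : ∀ a w, a ∈ T → s(a, w) ∈ E → w ∈ T) :
    ∀ {a b : V} (p : G.Walk a b), (∀ e ∈ p.edges, e ∈ E) → a ∈ T → ∀ v ∈ p.support, v ∈ T := by
  intro a b p
  induction p with
  | nil => intro _ ha v hv; simp at hv; rwa [hv]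
  | @cons a c b h p ih =>
    intro hE ha v hv
    have hcT : c ∈ T := hT a c ha (hE _ (by simp))
    rw [Walk.support_cons, List.mem_cons] at hv
    rcases hv with rfl | hv
    · exact ha
    · exact ih (fun e he => hE e (by rw [Walk.edges_cons]; exact List.mem_cons_of_mem _ he))
        hcT v hv

/-- No three vertices are pairwise joined by edges of a cycle of length at least 4. -/
lemma no_triangle {z p q r : V} {c : G.Walk z z} (hc : c.IsCycle) (hlen : 4 ≤ c.length)
    (hpq : s(p, q) ∈ c.edges) (hqr : s(q, r) ∈ c.edges) (hpr : s(p, r) ∈ c.edges) :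
    False := by
  classical
  have hpq' : p ≠ q := (c.adj_of_mem_edges hpq).ne
  have hqr' : q ≠ r := (c.adj_of_mem_edges hqr).ne
  have hpr' : p ≠ r := (c.adj_of_mem_edges hpr).ne
  have hp : p ∈ c.support := Walk.fst_mem_support_of_mem_edges c hpq
  set T : Set V := {p, q, r} with hT
  have hclose : ∀ a w, a ∈ T → s(a, w) ∈ c.edges → w ∈ T := by
    intro a w ha he
    have key : ∀ b₁ b₂ : V, b₁ ≠ b₂ → s(a, b₁) ∈ c.edges → s(a, b₂) ∈ c.edges →
        b₁ ∈ T → b₂ ∈ T → w ∈ T := by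
      intro b₁ b₂ hne h1 h2 hb₁ hb₂
      obtain ⟨d₁, d₂, hd, hiff⟩ := two_nbrs hc (Walk.fst_mem_support_of_mem_edges c he)
      rcases (hiff w).mp he with rfl | rfl
      · rcases (hiff b₁).mp h1 with rfl | rfl
        · exact hb₁
        · rcases (hiff b₂).mp h2 with rfl | rfl
          · exact hb₂
          · exact absurd rfl hne
      · rcases (hiff b₂).mp h2 with rfl | rfl
        · rcases (hiff b₁).mp h1 with rfl | rfl
          · exact absurd rfl hne
          · exact hb₁
        · exact hb₂
    rcases ha with rfl | rfl | rfl
    · exact key q r hqr' hpq hpr (by simp [hT]) (by simp [hT])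
    · exact key p r hpr' (Sym2.eq_swap ▸ hpq) hqr (by simp [hT]) (by simp [hT])
    · exact key p q hpq' (Sym2.eq_swap ▸ hpr) (Sym2.eq_swap ▸ hqr) (by simp [hT]) (by simp [hT])
  have hallrot : ∀ v ∈ (c.rotate _ hp).support, v ∈ T :=
    spread hclose (c.rotate _ hp) (fun e he => (mem_edges_rotate_iff c hp e).mp he)
      (by simp [hT])
  have hall : ∀ v ∈ c.support, v ∈ T := by
    intro v hv
    exact hallrot v ((mem_support_rotate_iff c hc hp).mpr hv)
  -- cardinality contradiction
  have hnd : c.support.tail.Nodup := hc.support_nodup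
  have htlen : c.support.tail.length = c.length := by
    have h1 := c.length_support
    rw [c.support_eq_cons] at h1
    simp only [List.length_cons] at h1
    omega
  have hsub : c.support.tail.toFinset ⊆ ({p, q, r} : Finset V) := by
    intro v hv
    rw [List.mem_toFinset] at hv
    have := hall v (List.mem_of_mem_tail hv)
    rcases this with rfl | rfl | rfl <;> simp
  have hcard1 : c.support.tail.toFinset.card = c.support.tail.length :=
    List.toFinset_card_of_nodup hnd
  have hcard2 : ({p, q, r} : Finset V).card ≤ 3 := by
    apply (Finset.card_insert_le _ _).trans
    apply Nat.succ_le_succ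
    apply (Finset.card_insert_le _ _).trans
    simp
  have := Finset.card_le_card hsub
  omega

/-- Splitting a cycle along a chord produces two shorter cycles. -/
lemma split {z x y : V} {Z : G.Walk z z} (hZ : Z.IsCycle) (hx : x ∈ Z.support)
    (hy : y ∈ Z.support) (hxy : G.Adj x y) (hch : s(x, y) ∉ Z.edges) :
    ∃ (B : G.Walk x x) (A : G.Walk y y), A.IsCycle ∧ B.IsCycle ∧
      3 ≤ A.length ∧ 3 ≤ B.length ∧ A.length + B.length = Z.length + 2 ∧
      (∀ v ∈ A.support, v ∈ Z.support) ∧ (∀ v ∈ B.support, v ∈ Z.support) := by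
  classical
  have hrot : (Z.rotate _ hx).IsCycle := hZ.rotate hx
  obtain ⟨s₀, h₀, p, hps⟩ := Walk.not_nil_iff.mp hrot.not_nil
  have hcyc' : (Walk.cons h₀ p).IsCycle := hps ▸ hrot
  obtain ⟨hpath, hfe⟩ := (Walk.cons_isCycle_iff p h₀).mp hcyc'
  have hlenrot : (Walk.cons h₀ p).length = Z.length := by rw [← hps]; exact length_rotate Z hx
  have hedgesrot : ∀ e, e ∈ (Walk.cons h₀ p).edges ↔ e ∈ Z.edges := by
    intro e; rw [← hps]; exact mem_edges_rotate_iff Z hx e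
  have hsupprot : ∀ v, v ∈ (Walk.cons h₀ p).support ↔ v ∈ Z.support := by
    intro v; rw [← hps]; exact mem_support_rotate_iff Z hZ hx
  have hyx : y ≠ x := hxy.ne'
  have hyp : y ∈ p.support := by
    have := (hsupprot y).mpr hy
    rw [Walk.support_cons, List.mem_cons] at this
    rcases this with rfl | h
    · exact absurd rfl hyx
    · exact h
  set p₁ := p.takeUntil y hyp with hp₁
  set p₂ := p.dropUntil y hyp with hp₂
  have hspec : p₁.append p₂ = p := p.take_spec hyp
  have hp₁path : p₁.IsPath := hpath.takeUntil hyp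
  have hp₂path : p₂.IsPath := hpath.dropUntil hyp
  have hsuppapp : p.support = p₁.support ++ p₂.support.tail := by
    rw [← hspec, Walk.support_append]
  have hnd : (p₁.support ++ p₂.support.tail).Nodup := by
    rw [← hsuppapp]; exact hpath.support_nodup
  have hdisj : ∀ v, v ∈ p₁.support → v ∈ p₂.support.tail → False := by
    intro v h1 h2
    exact (List.disjoint_of_nodup_append hnd) h1 h2
  have hxp₂ : x ∈ p₂.support := p₂.end_mem_support
  have hxnp₁ : x ∉ p₁.support := by
    intro hmem
    have : x ∈ p₂.support.tail := by
      rw [p₂.support_eq_cons] at hxp₂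
      rcases List.mem_cons.mp hxp₂ with h | h
      · exact absurd h.symm hyx
      · exact h
    exact hdisj x hmem this
  have hlen3 : 3 ≤ (Walk.cons h₀ p).length := hcyc'.three_le_length
  have hlsum : p₁.length + p₂.length = p.length := by
    rw [← hspec, Walk.length_append]
  have hys₀ : y ≠ s₀ := by
    rintro rfl
    exact hch ((hedgesrot s(x, y)).mp (by rw [Walk.edges_cons]; exact List.mem_cons_self))
  have hp₁len : 1 ≤ p₁.length := by
    rcases Nat.eq_zero_or_pos p₁.length with h | h
    · exfalso
      have : p₁.Nil := by rwa [Walk.nil_iff_length_eq]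
      have : s₀ = y := this.eq
      exact hys₀ this.symm
    · omega
  have hp₂len : 2 ≤ p₂.length := by
    by_contra hcon
    push_neg at hcon
    have h0 : p₂.length ≠ 0 := by
      intro h0
      exact hyx (Walk.Nil.eq (Walk.nil_iff_length_eq.mpr h0))
    have h1 : p₂.length = 1 := by omega
    have hedge : s(y, x) ∈ p₂.edges := length_one_edge p₂ h1
    have hmem : s(x, y) ∈ p.edges := by
      rw [← hspec, Walk.edges_append, List.mem_append]
      exact Or.inr (Sym2.eq_swap ▸ hedge)
    exact hch ((hedgesrot s(x, y)).mp
      (by rw [Walk.edges_cons]; exact List.mem_cons_of_mem _ hmem))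
  -- the two pieces
  refine ⟨Walk.cons hxy p₂, Walk.cons hxy.symm (Walk.cons h₀ p₁), ?_, ?_, ?_, ?_, ?_, ?_, ?_⟩
  · -- A is a cycle
    rw [Walk.cons_isCycle_iff]
    constructor
    · rw [Walk.cons_isPath_iff]
      exact ⟨hp₁path, hxnp₁⟩
    · rw [Walk.edges_cons, List.mem_cons]
      rintro (h | h)
      · rw [Sym2.eq_iff] at h
        rcases h with ⟨h1, -⟩ | ⟨h1, -⟩
        · exact hyx h1
        · exact hys₀ h1
      · exact hxnp₁ (Walk.fst_mem_support_of_mem_edges p₁ (Sym2.eq_swap ▸ h))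
  · -- B is a cycle
    rw [Walk.cons_isCycle_iff]
    refine ⟨hp₂path, fun h => hch ?_⟩
    apply (hedgesrot s(x, y)).mp
    rw [Walk.edges_cons]
    apply List.mem_cons_of_mem
    rw [← hspec, Walk.edges_append, List.mem_append]
    exact Or.inr h
  · simp only [Walk.length_cons]; omega
  · simp only [Walk.length_cons]; omega
  · simp only [Walk.length_cons]
    rw [Walk.length_cons] at hlenrot
    omega
  · intro v hv
    simp only [Walk.support_cons, List.mem_cons] at hv
    rcases hv with rfl | rfl | hv
    · exact hy
    · exact hx
    · apply (hsupprot v).mp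
      rw [Walk.support_cons, List.mem_cons]
      right
      rw [← hspec, Walk.mem_support_append_iff]
      exact Or.inl hv
  · intro v hv
    simp only [Walk.support_cons, List.mem_cons] at hv
    rcases hv with rfl | hv
    · exact hx
    · apply (hsupprot v).mp
      rw [Walk.support_cons, List.mem_cons]
      right
      rw [← hspec, Walk.mem_support_append_iff]
      exact Or.inr hv

lemma support_last' {a b : V} (p : G.Walk a b) : p.support.getLast? = some b := by
  induction p with
  | nil => simp
  | @cons a c b h p ih =>
    rw [Walk.support_cons, p.support_eq_cons, List.getLast?_cons_cons, ← p.support_eq_cons, ih]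

/-- A cycle containing a given edge can be rotated so that this edge comes first. -/
lemma rotate_first_edge {z x y : V} {c : G.Walk z z} (hc : c.IsCycle)
    (he : s(x, y) ∈ c.edges) :
    ∃ (x' y' : V) (h : G.Adj x' y') (p : G.Walk y' x'),
      s(x', y') = s(x, y) ∧ (Walk.cons h p).IsCycle ∧
      (∀ e, e ∈ (Walk.cons h p).edges ↔ e ∈ c.edges) ∧
      (∀ v, v ∈ (Walk.cons h p).support ↔ v ∈ c.support) ∧
      (Walk.cons h p).length = c.length := by
  classical
  -- find the dart of this edge
  rw [Walk.edges, List.mem_map] at he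
  obtain ⟨d, hd, hde⟩ := he
  have hfs : (d.fst = x ∧ d.snd = y) ∨ (d.fst = y ∧ d.snd = x) := by
    have : s(d.fst, d.snd) = s(x, y) := hde
    rwa [Sym2.eq_iff] at this
  -- wlog via a helper handling d.fst/d.snd directly
  suffices h : ∀ (x₀ y₀ : V), (∃ d ∈ c.darts, d.fst = x₀ ∧ d.snd = y₀) →
      ∃ (x' y' : V) (h : G.Adj x' y') (p : G.Walk y' x'),
      s(x', y') = s(x₀, y₀) ∧ (Walk.cons h p).IsCycle ∧
      (∀ e, e ∈ (Walk.cons h p).edges ↔ e ∈ c.edges) ∧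
      (∀ v, v ∈ (Walk.cons h p).support ↔ v ∈ c.support) ∧
      (Walk.cons h p).length = c.length by
    rcases hfs with ⟨h1, h2⟩ | ⟨h1, h2⟩
    · exact h x y ⟨d, hd, h1, h2⟩
    · obtain ⟨x', y', hadj, p, heq, rest⟩ := h y x ⟨d, hd, h1, h2⟩
      exact ⟨x', y', hadj, p, by rw [heq, Sym2.eq_swap], rest⟩
  rintro x₀ y₀ ⟨d, hd, hdf, hds⟩
  have hx₀ : x₀ ∈ c.support := hdf ▸ Walk.dart_fst_mem_support_of_mem_darts c hd
  have hrot : (c.rotate _ hx₀).IsCycle := hc.rotate hx₀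
  obtain ⟨s₀, h₀, p, hps⟩ := Walk.not_nil_iff.mp hrot.not_nil
  have hcyc' : (Walk.cons h₀ p).IsCycle := hps ▸ hrot
  obtain ⟨hpath, hfe⟩ := (Walk.cons_isCycle_iff p h₀).mp hcyc'
  have hdrot : d ∈ (Walk.cons h₀ p).darts := by
    rw [← hps]
    exact (Walk.rotate_darts c _ hx₀).mem_iff.mpr hd
  -- first-vertex uniqueness of darts in a cycle
  have hnodup : ((Walk.cons h₀ p).darts.map fun d => d.fst).Nodup := by
    rw [Walk.map_fst_darts, Walk.support_cons, List.dropLast_cons_of_ne_nil p.support_ne_nil]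
    have hnd' : p.support.Nodup := hpath.support_nodup
    have hsplit : p.support.dropLast ++ [x₀] = p.support :=
      List.dropLast_append_getLast? _ (by rw [Option.mem_def, support_last'])
    have hnd2 : (p.support.dropLast ++ [x₀]).Nodup := by rw [hsplit]; exact hnd'
    rw [List.nodup_append] at hnd2
    exact List.nodup_cons.mpr ⟨fun hmem => hnd2.2.2 x₀ hmem x₀ (by simp) rfl, hnd2.1⟩
  -- conclude d is the first dart
  have hdartseq : (Walk.cons h₀ p).darts = ⟨(x₀, s₀), h₀⟩ :: p.darts := by
    rw [Walk.darts_cons]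
  have hdfirst : d = ⟨(x₀, s₀), h₀⟩ := by
    rw [hdartseq] at hdrot
    rcases List.mem_cons.mp hdrot with h | h
    · exact h
    · exfalso
      rw [hdartseq] at hnodup
      rw [List.map_cons, List.nodup_cons] at hnodup
      exact hnodup.1 (List.mem_map.mpr ⟨d, h, hdf⟩)
  have hs₀ : s₀ = y₀ := by
    have h1 := congrArg (fun d : G.Dart => d.snd) hdfirst
    simp only at h1
    exact h1.symm.trans hds
  refine ⟨x₀, s₀, h₀, p, by rw [hs₀], hcyc', ?_, ?_, ?_⟩
  · intro e; rw [← hps]; exact mem_edges_rotate_iff c hx₀ e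
  · intro v; rw [← hps]; exact mem_support_rotate_iff c hc hx₀
  · rw [← hps]; exact length_rotate c hx₀

lemma walk_four {a b : V} (p : G.Walk a b) (h : p.length = 4) :
    ∃ (v1 v2 v3 : V) (h1 : G.Adj a v1) (h2 : G.Adj v1 v2) (h3 : G.Adj v2 v3)
      (h4 : G.Adj v3 b),
      p = Walk.cons h1 (Walk.cons h2 (Walk.cons h3 (Walk.cons h4 Walk.nil))) := by
  cases p with
  | nil => simp at h
  | cons h1 p =>
    cases p with
    | nil => simp [Walk.length_cons] at h
    | cons h2 p =>
      cases p with
      | nil => simp [Walk.length_cons] at h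
      | cons h3 p =>
        cases p with
        | nil => simp [Walk.length_cons] at h
        | cons h4 p =>
          cases p with
          | cons h5 p => simp [Walk.length_cons] at h
          | nil => exact ⟨_, _, _, h1, h2, h3, h4, rfl⟩

lemma walk_five {a b : V} (p : G.Walk a b) (h : p.length = 5) :
    ∃ (v1 v2 v3 v4 : V) (h1 : G.Adj a v1) (h2 : G.Adj v1 v2) (h3 : G.Adj v2 v3)
      (h4 : G.Adj v3 v4) (h5 : G.Adj v4 b),
      p = Walk.cons h1 (Walk.cons h2 (Walk.cons h3 (Walk.cons h4 (Walk.cons h5 Walk.nil)))) := by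
  cases p with
  | nil => simp at h
  | cons h1 p =>
    cases p with
    | nil => simp [Walk.length_cons] at h
    | cons h2 p =>
      cases p with
      | nil => simp [Walk.length_cons] at h
      | cons h3 p =>
        cases p with
        | nil => simp [Walk.length_cons] at h
        | cons h4 p =>
          cases p with
          | nil => simp [Walk.length_cons] at h
          | cons h5 p =>
            cases p with
            | cons h6 p => simp [Walk.length_cons] at h
            | nil => exact ⟨_, _, _, _, h1, h2, h3, h4, h5, rfl⟩

set_option maxHeartbeats 1000000 in
lemma hole4 {va vb vc vd : V} (hab : G.Adj va vb) (hbc : G.Adj vb vc) (hcd : G.Adj vc vd)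
    (hda : G.Adj vd va) (hacne : va ≠ vc) (hbdne : vb ≠ vd)
    (hac : ¬ G.Adj va vc) (hbd : ¬ G.Adj vb vd) :
    IsHole G (Walk.cons hab (Walk.cons hbc (Walk.cons hcd (Walk.cons hda Walk.nil)))) := by
  have hcyc : (Walk.cons hab (Walk.cons hbc (Walk.cons hcd (Walk.cons hda
      Walk.nil)))).IsCycle := by
    rw [Walk.cons_isCycle_iff]
    constructor
    · rw [Walk.isPath_def]
      simp only [Walk.support_cons, Walk.support_nil, List.nodup_cons, List.mem_cons,
        List.mem_singleton, List.not_mem_nil, or_false, not_or, List.nodup_nil, and_true]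
      exact ⟨⟨hbc.ne, hbdne, hab.ne'⟩, ⟨hcd.ne, hacne.symm⟩, hda.ne, not_false⟩
    · intro hmem
      simp only [Walk.edges_cons, Walk.edges_nil, List.mem_cons, List.not_mem_nil, or_false,
        Sym2.eq_iff] at hmem
      rcases hmem with (⟨h1, h2⟩ | ⟨h1, h2⟩) | (⟨h1, h2⟩ | ⟨h1, h2⟩) | (⟨h1, h2⟩ | ⟨h1, h2⟩)
      · exact hab.ne h1
      · exact hacne h1
      · exact hacne h1
      · exact hbc.ne h2
      · exact hab.ne' h2
      · exact hbdne h2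
  refine ⟨hcyc, by simp [Walk.length_cons], ?_⟩
  intro v₁ hv₁ v₂ hv₂ hadj
  simp only [Walk.support_cons, Walk.support_nil, List.mem_cons, List.mem_singleton,
    List.not_mem_nil, or_false] at hv₁ hv₂
  simp only [Walk.edges_cons, Walk.edges_nil, List.mem_cons, List.not_mem_nil, or_false,
    Sym2.eq_iff]
  have hne := hadj.ne
  rcases hv₁ with rfl | rfl | rfl | rfl | rfl <;> rcases hv₂ with rfl | rfl | rfl | rfl | rfl <;>
    first
      | exact absurd rfl hne
      | exact absurd hadj hac
      | exact absurd hadj.symm hac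
      | exact absurd hadj hbd
      | exact absurd hadj.symm hbd
      | simp

end WalkLemmas


/-! ### Hole structure -/

/-- The set of caretakers of cared edges of the hole `c`. -/
def Wset (A : V → V → Prop) {u : V} (c : (phylogenyGraph A).Walk u u) : Set V :=
  {w | ∃ x y, s(x, y) ∈ c.edges ∧ CaredEdge A x y ∧ A x w ∧ A y w}

/-- The vertices of the hole together with the caretakers. -/
def Sset (A : V → V → Prop) {u : V} (c : (phylogenyGraph A).Walk u u) : Set V :=
  {v | v ∈ c.support} ∪ Wset A c

section Hole

variable [DecidableEq V] {u : V} {c : (phylogenyGraph A).Walk u u}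

/-- Caretaker data: the two in-neighbours of a caretaker are exactly the endpoints of
its cared edge. -/
lemma care_full (hD : IsIJDigraph 2 2 A) {w : V} (hw : w ∈ Wset A c) :
    ∃ x y, x ≠ y ∧ s(x, y) ∈ c.edges ∧ CaredEdge A x y ∧ A x w ∧ A y w ∧
      (∀ t, A t w → t = x ∨ t = y) := by
  obtain ⟨x, y, he, hcared, hxw, hyw⟩ := hw
  have hxy : x ≠ y := hcared.1.1
  refine ⟨x, y, hxy, he, hcared, hxw, hyw, ?_⟩
  intro t ht
  by_contra hcon
  push_neg at hcon
  exact threeIn hD ht hxw hyw hcon.1 hcon.2 hxy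

lemma hole_edge (hH : IsHole (phylogenyGraph A) c) {a b : V} (ha : a ∈ c.support)
    (hb : b ∈ c.support) (hadj : (underlyingGraph A).Adj a b) : s(a, b) ∈ c.edges :=
  hH.2.2 a ha b hb (P_of_U hadj)

lemma W_not_hole (hD : IsIJDigraph 2 2 A) (hH : IsHole (phylogenyGraph A) c) {w : V}
    (hw : w ∈ Wset A c) : w ∉ c.support := by
  intro hmem
  obtain ⟨x, y, he, hcared, hxw, hyw⟩ := hw
  have hx : x ∈ c.support := Walk.fst_mem_support_of_mem_edges c he
  have hy : y ∈ c.support := Walk.snd_mem_support_of_mem_edges c he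
  have h1 : s(x, w) ∈ c.edges := hole_edge hH hx hmem (U_of_arc hD hxw)
  have h2 : s(y, w) ∈ c.edges := hole_edge hH hy hmem (U_of_arc hD hyw)
  exact no_triangle hH.1 hH.2.1 he h2 h1

/-- No underlying edge joins two caretakers. -/
lemma no_WW (hD : IsIJDigraph 2 2 A) (hH : IsHole (phylogenyGraph A) c) {w w' : V}
    (hw : w ∈ Wset A c) (hw' : w' ∈ Wset A c) (hadj : (underlyingGraph A).Adj w w') :
    False := by
  obtain ⟨x, y, hxy, he, hc1, hxw, hyw, hin⟩ := care_full hD hw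
  obtain ⟨x', y', hxy', he', hc1', hxw', hyw', hin'⟩ := care_full hD hw'
  rcases hadj.2 with h | h
  · rcases hin' w h with rfl | rfl
    · exact W_not_hole hD hH hw (Walk.fst_mem_support_of_mem_edges c he')
    · exact W_not_hole hD hH hw (Walk.snd_mem_support_of_mem_edges c he')
  · rcases hin w' h with rfl | rfl
    · exact W_not_hole hD hH hw' (Walk.fst_mem_support_of_mem_edges c he)
    · exact W_not_hole hD hH hw' (Walk.snd_mem_support_of_mem_edges c he)

lemma mem_Sset_support (hD : IsIJDigraph 2 2 A) (hH : IsHole (phylogenyGraph A) c)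
    {w v : V} (hw : w ∈ Wset A c) (hv : v ∈ Sset A c)
    (hadj : (underlyingGraph A).Adj w v) : v ∈ c.support := by
  rcases hv with hv | hv
  · exact hv
  · exact absurd (no_WW hD hH hw hv hadj) not_false

/-- The bad chorded-square configuration. -/
structure Bad4Data (A : V → V → Prop) {u : V} (c : (phylogenyGraph A).Walk u u)
    (w a b d y : V) : Prop where
  haw : A a w
  hyw : A y w
  hwb : A w b
  hwd : A w d
  hab : A a b
  hbd : A b d
  heab : s(a, b) ∈ c.edges
  hebd : s(b, d) ∈ c.edges
  hcay : CaredEdge A a y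
  hb_supp : b ∈ c.support
  hin_w : ∀ t, A t w → t = a ∨ t = y
  hin_b : ∀ t, A t b → t = w ∨ t = a
  hin_d : ∀ t, A t d → t = w ∨ t = b
  hout_w : ∀ t, A w t → t = b ∨ t = d
  hout_a : ∀ t, A a t → t = w ∨ t = b

lemma bad_build (hD : IsIJDigraph 2 2 A) (hH : IsHole (phylogenyGraph A) c)
    {w a b d : V} (hw : w ∈ Wset A c) (ha : a ∈ c.support) (hb : b ∈ c.support)
    (hd : d ∈ c.support) (had : a ≠ d)
    (haw : A a w) (hwb : A w b) (hwd : A w d)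
    (hab_adj : (underlyingGraph A).Adj a b) (hbd_adj : (underlyingGraph A).Adj b d) :
    ∃ y, Bad4Data A c w a b d y := by
  obtain ⟨x0, y0, hxy0, he0, hcared0, hx0w, hy0w, hin_w⟩ := care_full hD hw
  have hwa_ne : w ≠ a := (arc_ne hD haw).symm
  have hwb_ne : w ≠ b := arc_ne hD hwb
  have hwd_ne : w ≠ d := arc_ne hD hwd
  have hab : A a b := by
    rcases hab_adj.2 with h | h
    · exact h
    · exact absurd (acyc3 hD h haw hwb) not_false
  have hbd : A b d := by
    rcases hbd_adj.2 with h | h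
    · exact h
    · exact absurd (threeIn hD h hwb hab (fun hh => hwd_ne hh.symm) had.symm hwa_ne)
        not_false
  have hbd_ne : b ≠ d := arc_ne hD hbd
  have hab_ne : a ≠ b := arc_ne hD hab
  -- identify the parents of w
  have hparents : a = x0 ∨ a = y0 := hin_w a haw
  have hex : ∃ y, A y w ∧ CaredEdge A a y ∧ s(a, y) ∈ c.edges ∧
      (∀ t, A t w → t = a ∨ t = y) := by
    rcases hparents with rfl | rfl
    · exact ⟨y0, hy0w, hcared0, he0, hin_w⟩
    · refine ⟨x0, hx0w, caredEdge_symm hcared0, Sym2.eq_swap ▸ he0, fun t ht => ?_⟩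
      rcases hin_w t ht with h | h
      · exact Or.inr h
      · exact Or.inl h
  obtain ⟨y, hyw, hcay, heay, hin_w'⟩ := hex
  refine ⟨y, ⟨haw, hyw, hwb, hwd, hab, hbd,
    hole_edge hH ha hb hab_adj, hole_edge hH hb hd hbd_adj, hcay, hb, hin_w', ?_, ?_, ?_, ?_⟩⟩
  · intro t ht
    by_contra hcon
    push_neg at hcon
    exact threeIn hD ht hwb hab hcon.1 hcon.2 hwa_ne
  · intro t ht
    by_contra hcon
    push_neg at hcon
    exact threeIn hD ht hwd hbd hcon.1 hcon.2 hwb_ne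
  · intro t ht
    by_contra hcon
    push_neg at hcon
    exact threeOut hD ht hwb hwd hcon.1 hcon.2 hbd_ne
  · intro t ht
    by_contra hcon
    push_neg at hcon
    exact threeOut hD ht haw hab hcon.1 hcon.2 (fun hh => hwb_ne hh)

/-- One caretaker-corner case of the chorded square classification. -/
lemma bad_c4_aux (hD : IsIJDigraph 2 2 A) (hH : IsHole (phylogenyGraph A) c)
    {p q r s : V} (hpW : p ∈ Wset A c)
    (hSq : q ∈ Sset A c) (hSr : r ∈ Sset A c) (hSs : s ∈ Sset A c)
    (hpq : (underlyingGraph A).Adj p q) (hqr : (underlyingGraph A).Adj q r)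
    (hrs : (underlyingGraph A).Adj r s) (hsp : (underlyingGraph A).Adj s p)
    (hchord : (underlyingGraph A).Adj p r) (hqs : q ≠ s) :
    ∃ y, Bad4Data A c p q r s y ∨ Bad4Data A c p s r q y := by
  have hq : q ∈ c.support := mem_Sset_support hD hH hpW hSq hpq
  have hr : r ∈ c.support := mem_Sset_support hD hH hpW hSr hchord
  have hs : s ∈ c.support := mem_Sset_support hD hH hpW hSs hsp.symm
  obtain ⟨x0, y0, hxy0, he0, hcared0, hx0w, hy0w, hin_w⟩ := care_full hD hpW
  have pair_no_adj : ∀ t t' : V, (t = x0 ∨ t = y0) → (t' = x0 ∨ t' = y0) →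
      ¬ (underlyingGraph A).Adj t t' := by
    rintro t t' (rfl | rfl) (rfl | rfl)
    · exact fun h => h.ne rfl
    · exact hcared0.2
    · exact fun h => hcared0.2 h.symm
    · exact fun h => h.ne rfl
  -- the chord is oriented out of the caretaker
  have hpr : A p r := by
    rcases hchord.2 with h | h
    · exact h
    exfalso
    have hrpar := hin_w r h
    rcases hpq.2 with h2 | h2
    · -- A p q
      rcases hsp.2 with h4 | h4
      · -- A s p : both r, s parents
        exact pair_no_adj r s hrpar (hin_w s h4) hrs
      · -- A p s
        rcases hqr.2 with h3 | h3
        · exact acyc3 hD h3 h h2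
        · rcases hrs.2 with h5 | h5
          · exact threeOut hD h h3 h5 hpq.ne hsp.ne.symm hqs
          · exact acyc3 hD h5 h h4
    · -- A q p : q parent
      rcases hsp.2 with h4 | h4
      · -- A s p : q, s, r all parents, three distinct in a pair
        have hrq : r = q ∨ r = s := by
          rcases hin_w q h2 with rfl | rfl <;> rcases hin_w s h4 with rfl | rfl <;>
            rcases hrpar with rfl | rfl <;> tauto
        rcases hrq with rfl | rfl
        · exact hqr.ne rfl
        · exact hrs.ne rfl
      · -- A p s : parents q and r
        exact pair_no_adj q r (hin_w q h2) hrpar hqr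
  -- determine the parent among q, s
  rcases hpq.2 with hq1 | hq1
  · -- A p q : q is an out-neighbour
    rcases hsp.2 with hs1 | hs1
    · -- A s p : s is the parent; configuration (p, s, r, q)
      obtain ⟨y, hy⟩ := bad_build hD hH hpW hs hr hq (Ne.symm hqs) hs1 hpr hq1
        hrs.symm hqr.symm
      exact ⟨y, Or.inr hy⟩
    · -- A p s : three out-neighbours q, r, s
      exact absurd (threeOut hD hq1 hpr hs1 hqr.ne hqs hrs.ne) not_false
  · -- A q p : q is the parent
    rcases hsp.2 with hs1 | hs1
    · -- A s p : both q and s parents; then s(q,s) is an edge of c, triangle q r s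
      have heqs : s(q, s) ∈ c.edges := by
        rcases hin_w q hq1 with rfl | rfl <;> rcases hin_w s hs1 with rfl | rfl
        · exact absurd rfl hqs
        · exact he0
        · exact Sym2.eq_swap ▸ he0
        · exact absurd rfl hqs
      exact absurd (no_triangle hH.1 hH.2.1 (hole_edge hH hq hr hqr)
        (hole_edge hH hr hs hrs) heqs) not_false
    · -- A p s : configuration (p, q, r, s)
      obtain ⟨y, hy⟩ := bad_build hD hH hpW hq hr hs hqs hq1 hpr hs1 hqr hrs
      exact ⟨y, Or.inl hy⟩

/-- Both chord endpoints in the hole is impossible (directional version). -/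
lemma beta_arc (hD : IsIJDigraph 2 2 A) (hH : IsHole (phylogenyGraph A) c)
    {p q r s : V} (hqW : q ∈ Wset A c) (hsW : s ∈ Wset A c)
    (hpq : (underlyingGraph A).Adj p q) (hqr : (underlyingGraph A).Adj q r)
    (hrs : (underlyingGraph A).Adj r s) (hsp : (underlyingGraph A).Adj s p)
    (hchord : (underlyingGraph A).Adj p r) (hqs : q ≠ s) (hpr : A p r) : False := by
  have harc : ∀ t : V, t ∈ Wset A c → (underlyingGraph A).Adj p t →
      (underlyingGraph A).Adj t r → A t r := by
    intro t htW hpt htr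
    obtain ⟨x1, y1, hxy1, he1, hcared1, hx1, hy1, hin1⟩ := care_full hD htW
    rcases htr.2 with h3 | h3
    · exact h3
    · exfalso
      rcases hpt.2 with h2 | h2
      · -- A p t and A r t : both p,r parents of t
        have hp1 := hin1 p h2
        have hr1 := hin1 r h3
        rcases hp1 with rfl | rfl <;> rcases hr1 with rfl | rfl
        · exact hchord.ne rfl
        · exact hcared1.2 hchord
        · exact hcared1.2 hchord.symm
        · exact hchord.ne rfl
      · -- A t p and A r t
        exact acyc3 hD hpr h3 h2
  have hq2 : A q r := harc q hqW hpq hqr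
  have hs2 : A s r := harc s hsW (hsp.symm) (hrs.symm)
  exact threeIn hD hpr hq2 hs2 hpq.ne hsp.ne.symm hqs

/-- Classification of chorded squares inside `S`. -/
lemma bad_c4 (hD : IsIJDigraph 2 2 A) (hH : IsHole (phylogenyGraph A) c)
    {p q r s : V} (hSp : p ∈ Sset A c) (hSq : q ∈ Sset A c) (hSr : r ∈ Sset A c)
    (hSs : s ∈ Sset A c)
    (hpq : (underlyingGraph A).Adj p q) (hqr : (underlyingGraph A).Adj q r)
    (hrs : (underlyingGraph A).Adj r s) (hsp : (underlyingGraph A).Adj s p)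
    (hchord : (underlyingGraph A).Adj p r) (hqs : q ≠ s) :
    ∃ w a b d y, Bad4Data A c w a b d y ∧
      ((w = p ∧ a = q ∧ b = r ∧ d = s) ∨ (w = p ∧ a = s ∧ b = r ∧ d = q) ∨
       (w = r ∧ a = s ∧ b = p ∧ d = q) ∨ (w = r ∧ a = q ∧ b = p ∧ d = s)) := by
  by_cases hpW : p ∈ Wset A c
  · obtain ⟨y, hy | hy⟩ := bad_c4_aux hD hH hpW hSq hSr hSs hpq hqr hrs hsp hchord hqs
    · exact ⟨p, q, r, s, y, hy, Or.inl ⟨rfl, rfl, rfl, rfl⟩⟩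
    · exact ⟨p, s, r, q, y, hy, Or.inr (Or.inl ⟨rfl, rfl, rfl, rfl⟩)⟩
  by_cases hrW : r ∈ Wset A c
  · obtain ⟨y, hy | hy⟩ := bad_c4_aux hD hH hrW hSs hSp hSq hrs hsp hpq hqr
      hchord.symm hqs.symm
    · exact ⟨r, s, p, q, y, hy, Or.inr (Or.inr (Or.inl ⟨rfl, rfl, rfl, rfl⟩))⟩
    · exact ⟨r, q, p, s, y, hy, Or.inr (Or.inr (Or.inr ⟨rfl, rfl, rfl, rfl⟩))⟩
  exfalso
  have hp : p ∈ c.support := by rcases hSp with h | h; exact h; exact absurd h hpW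
  have hr : r ∈ c.support := by rcases hSr with h | h; exact h; exact absurd h hrW
  have hqW : q ∈ Wset A c := by
    rcases hSq with h | h
    · exact absurd (no_triangle hH.1 hH.2.1 (hole_edge hH hp h hpq)
        (hole_edge hH h hr hqr) (hole_edge hH hp hr hchord)) not_false
    · exact h
  have hsW : s ∈ Wset A c := by
    rcases hSs with h | h
    · exact absurd (no_triangle hH.1 hH.2.1 (hole_edge hH hp h hsp.symm)
        (hole_edge hH h hr hrs.symm) (hole_edge hH hp hr hchord)) not_false
    · exact h
  rcases hchord.2 with h | h
  · exact beta_arc hD hH hqW hsW hpq hqr hrs hsp hchord hqs h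
  · exact beta_arc hD hH hsW hqW hrs hsp hpq hqr hchord.symm hqs.symm h

/-! ### The four attachment contradictions -/

lemma attach_ab (hD : IsIJDigraph 2 2 A) {w a b d y m : V}
    (hB : Bad4Data A c w a b d y) (hmw : m ≠ w) (hma : m ≠ a) (hmb : m ≠ b)
    (h1 : (underlyingGraph A).Adj m a) (h2 : (underlyingGraph A).Adj m b) : False := by
  have hma' : A m a := by
    rcases h1.2 with h | h
    · exact h
    · rcases hB.hout_a m h with rfl | rfl
      · exact absurd rfl hmw
      · exact absurd rfl hmb
  have hbm : A b m := by
    rcases h2.2 with h | h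
    · rcases hB.hin_b m h with rfl | rfl
      · exact absurd rfl hmw
      · exact absurd rfl hma
    · exact h
  exact acyc3 hD hma' hB.hab hbm

lemma attach_bd (hD : IsIJDigraph 2 2 A) (hH : IsHole (phylogenyGraph A) c)
    {w a b d y m : V} (hB : Bad4Data A c w a b d y)
    (hmw : m ≠ w) (hma : m ≠ a) (hmb : m ≠ b) (hmd : m ≠ d) (hmS : m ∈ Sset A c)
    (h1 : (underlyingGraph A).Adj m b) (h2 : (underlyingGraph A).Adj m d) : False := by
  have hbm : A b m := by
    rcases h1.2 with h | h
    · rcases hB.hin_b m h with rfl | rfl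
      · exact absurd rfl hmw
      · exact absurd rfl hma
    · exact h
  have hdm : A d m := by
    rcases h2.2 with h | h
    · rcases hB.hin_d m h with rfl | rfl
      · exact absurd rfl hmw
      · exact absurd rfl hmb
    · exact h
  have had : a ≠ d := by
    rintro rfl
    exact acyc_asymm hD hB.hab hB.hbd
  rcases hmS with hm | hm
  · -- m is a hole vertex : b has three neighbours a, d, m along c
    have hedge : s(b, m) ∈ c.edges := hole_edge hH hB.hb_supp hm (U_of_arc hD hbm)
    obtain ⟨d₁, d₂, hne, hiff⟩ := two_nbrs hH.1 hB.hb_supp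
    have h1' := (hiff a).mp (Sym2.eq_swap ▸ hB.heab)
    have h2' := (hiff d).mp hB.hebd
    have h3' := (hiff m).mp hedge
    rcases h1' with rfl | rfl <;> rcases h2' with rfl | rfl <;> rcases h3' with h3' | h3' <;>
      first
        | exact had rfl
        | exact hma h3'
        | exact hmd h3'
        | exact absurd rfl hne
  · -- m is a caretaker with parents b and d, contradiction with underlying edge b-d
    obtain ⟨x1, y1, hxy1, he1, hcared1, hx1, hy1, hin1⟩ := care_full hD hm
    have hb1 := hin1 b hbm
    have hd1 := hin1 d hdm
    have hbd_ne : b ≠ d := arc_ne hD hB.hbd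
    have hUbd : (underlyingGraph A).Adj b d := U_of_arc hD hB.hbd
    rcases hb1 with rfl | rfl <;> rcases hd1 with rfl | rfl
    · exact hbd_ne rfl
    · exact hcared1.2 hUbd
    · exact hcared1.2 hUbd.symm
    · exact hbd_ne rfl

lemma attach_wa (hD : IsIJDigraph 2 2 A) {w a b d y m : V}
    (hB : Bad4Data A c w a b d y) (hma : m ≠ a) (hmb : m ≠ b) (hmd : m ≠ d)
    (h1 : (underlyingGraph A).Adj m w) (h2 : (underlyingGraph A).Adj m a) : False := by
  have hmy : m = y := by
    rcases h1.2 with h | h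
    · rcases hB.hin_w m h with rfl | rfl
      · exact absurd rfl hma
      · rfl
    · rcases hB.hout_w m h with rfl | rfl
      · exact absurd rfl hmb
      · exact absurd rfl hmd
  subst hmy
  exact hB.hcay.2 h2.symm

lemma attach_dw (hD : IsIJDigraph 2 2 A) {w a b d y m : V}
    (hB : Bad4Data A c w a b d y) (hma : m ≠ a) (hmb : m ≠ b) (hmd : m ≠ d)
    (h1 : (underlyingGraph A).Adj m d) (h2 : (underlyingGraph A).Adj m w) : False := by
  have hmy : m = y := by
    rcases h2.2 with h | h
    · rcases hB.hin_w m h with rfl | rfl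
      · exact absurd rfl hma
      · rfl
    · rcases hB.hout_w m h with rfl | rfl
      · exact absurd rfl hmb
      · exact absurd rfl hmd
  subst hmy
  have hyb : m ≠ b := by
    rintro rfl
    exact acyc_asymm hD hB.hyw hB.hwb
  have hyw_ne : m ≠ w := arc_ne hD hB.hyw
  have hdy : A d m := by
    rcases h1.2 with h | h
    · rcases hB.hin_d m h with rfl | rfl
      · exact absurd rfl hyw_ne
      · exact absurd rfl hyb
    · exact h
  exact acyc3 hD hB.hwd hdy hB.hyw

/-! ### Building the detour cycle -/

lemma build (hD : IsIJDigraph 2 2 A) (hH : IsHole (phylogenyGraph A) c) :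
    ∀ {a b : V} (p : (phylogenyGraph A).Walk a b), p.IsPath →
      (∀ e ∈ p.edges, e ∈ c.edges) → (∀ v ∈ p.support, v ∈ c.support) →
      ∃ q : (underlyingGraph A).Walk a b,
        q.support.Nodup ∧ p.length ≤ q.length ∧
        (∀ v ∈ q.support, v ∈ p.support ∨
          (v ∉ c.support ∧ ∃ x y, s(x, y) ∈ p.edges ∧ CaredEdge A x y ∧ A x v ∧ A y v)) ∧
        (∀ e ∈ q.edges, e ∈ p.edges ∨
          ∃ z w', e = s(z, w') ∧ w' ∉ c.support ∧ w' ∈ q.support) := by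
  intro a b p
  induction p with
  | nil =>
    intro _ _ _
    exact ⟨Walk.nil, by simp, by simp, by simp, by simp⟩
  | @cons a a' b h p' ih =>
    intro hpath hE hS
    have hanp' : a ∉ p'.support := (Walk.cons_isPath_iff h p').mp hpath |>.2
    have hac : a ∈ c.support := hS a (by simp)
    have hfe : s(a, a') ∉ p'.edges := fun hmem =>
      hanp' (Walk.fst_mem_support_of_mem_edges p' hmem)
    obtain ⟨q', hnd', hlen', hsupp', hedge'⟩ := ih ((Walk.cons_isPath_iff h p').mp hpath).1
      (fun e he => hE e (by rw [Walk.edges_cons]; exact List.mem_cons_of_mem _ he))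
      (fun v hv => hS v (by rw [Walk.support_cons]; exact List.mem_cons_of_mem _ hv))
    have hanq' : a ∉ q'.support := by
      intro hmem
      rcases hsupp' a hmem with hmem' | ⟨hnc, -⟩
      · exact hanp' hmem'
      · exact hnc hac
    by_cases hU : (underlyingGraph A).Adj a a'
    · refine ⟨Walk.cons hU q', ?_, ?_, ?_, ?_⟩
      · rw [Walk.support_cons, List.nodup_cons]
        exact ⟨hanq', hnd'⟩
      · rw [Walk.length_cons, Walk.length_cons]; omega
      · intro v hv
        rw [Walk.support_cons, List.mem_cons] at hv
        rcases hv with rfl | hv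
        · exact Or.inl (by simp)
        · rcases hsupp' v hv with h1 | ⟨h1, x, y, he1, hc1, hx1, hy1⟩
          · exact Or.inl (by rw [Walk.support_cons]; exact List.mem_cons_of_mem _ h1)
          · exact Or.inr ⟨h1, x, y, by rw [Walk.edges_cons]; exact List.mem_cons_of_mem _ he1,
              hc1, hx1, hy1⟩
      · intro e he
        rw [Walk.edges_cons, List.mem_cons] at he
        rcases he with rfl | he
        · exact Or.inl (by simp)
        · rcases hedge' e he with h1 | ⟨z, w', he1, h2, h3⟩
          · exact Or.inl (by rw [Walk.edges_cons]; exact List.mem_cons_of_mem _ h1)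
          · exact Or.inr ⟨z, w', he1, h2, by
              rw [Walk.support_cons]; exact List.mem_cons_of_mem _ h3⟩
    · -- cared edge : insert a caretaker
      have he_c : s(a, a') ∈ c.edges := hE _ (by simp)
      have hcomp : (competitionGraph A).Adj a a' := by
        rcases h with h | h
        · exact absurd h hU
        · exact h
      obtain ⟨haa', w, haw, ha'w⟩ := hcomp
      have hcared : CaredEdge A a a' := ⟨⟨haa', w, haw, ha'w⟩, hU⟩
      have hwW : w ∈ Wset A c := ⟨a, a', he_c, hcared, haw, ha'w⟩
      have hwnc : w ∉ c.support := W_not_hole hD hH hwW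
      have hwq' : w ∉ q'.support := by
        intro hmem
        rcases hsupp' w hmem with hmem' | ⟨-, x, y, hxy_e, hxy_c, hxw, hyw⟩
        · exact hwnc (hS w (by rw [Walk.support_cons]; exact List.mem_cons_of_mem _ hmem'))
        · have hx : x = a ∨ x = a' := by
            by_contra hcon; push_neg at hcon
            exact threeIn hD hxw haw ha'w hcon.1 hcon.2 haa'
          have hy : y = a ∨ y = a' := by
            by_contra hcon; push_neg at hcon
            exact threeIn hD hyw haw ha'w hcon.1 hcon.2 haa'
          have hxyne : x ≠ y := hxy_c.1.1
          have : s(x, y) = s(a, a') := by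
            rcases hx with rfl | rfl <;> rcases hy with rfl | rfl
            · exact absurd rfl hxyne
            · rfl
            · exact Sym2.eq_swap
            · exact absurd rfl hxyne
          exact hfe (this ▸ hxy_e)
      have hadj1 : (underlyingGraph A).Adj a w := U_of_arc hD haw
      have hadj2 : (underlyingGraph A).Adj w a' := (U_of_arc hD ha'w).symm
      refine ⟨Walk.cons hadj1 (Walk.cons hadj2 q'), ?_, ?_, ?_, ?_⟩
      · rw [Walk.support_cons, Walk.support_cons, List.nodup_cons, List.nodup_cons]
        refine ⟨?_, hwq', hnd'⟩
        rw [List.mem_cons]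
        rintro (rfl | hmem)
        · exact hwnc hac
        · exact hanq' hmem
      · simp only [Walk.length_cons]; omega
      · intro v hv
        rw [Walk.support_cons, Walk.support_cons, List.mem_cons, List.mem_cons] at hv
        rcases hv with rfl | rfl | hv
        · exact Or.inl (by simp)
        · exact Or.inr ⟨hwnc, a, a', by simp, hcared, haw, ha'w⟩
        · rcases hsupp' v hv with h1 | ⟨h1, x, y, he1, hc1, hx1, hy1⟩
          · exact Or.inl (by rw [Walk.support_cons]; exact List.mem_cons_of_mem _ h1)
          · exact Or.inr ⟨h1, x, y, by rw [Walk.edges_cons]; exact List.mem_cons_of_mem _ he1,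
              hc1, hx1, hy1⟩
      · intro e he
        rw [Walk.edges_cons, Walk.edges_cons, List.mem_cons, List.mem_cons] at he
        rcases he with rfl | rfl | he
        · exact Or.inr ⟨a, w, rfl, hwnc, by simp⟩
        · exact Or.inr ⟨a', w, Sym2.eq_swap.symm, hwnc, by simp⟩
        · rcases hedge' e he with h1 | ⟨z, w'', he1, h2, h3⟩
          · exact Or.inl (by rw [Walk.edges_cons]; exact List.mem_cons_of_mem _ h1)
          · refine Or.inr ⟨z, w'', he1, h2, ?_⟩
            rw [Walk.support_cons, Walk.support_cons]
            exact List.mem_cons_of_mem _ (List.mem_cons_of_mem _ h3)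

/-- If the hole has a cared edge then there is a long cycle in the underlying graph
on vertices of `S`. -/
lemma exists_C (hD : IsIJDigraph 2 2 A) (hH : IsHole (phylogenyGraph A) c)
    (hcared : ∃ x y, s(x, y) ∈ c.edges ∧ CaredEdge A x y) :
    ∃ (z : V) (C : (underlyingGraph A).Walk z z), C.IsCycle ∧ 5 ≤ C.length ∧
      ∀ v ∈ C.support, v ∈ Sset A c := by
  obtain ⟨x, y, he, hcd⟩ := hcared
  obtain ⟨x₀, y₀, h₀, p, heq, hcyc, hedges, hsupps, hlen⟩ := rotate_first_edge hH.1 he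
  have hcd₀ : CaredEdge A x₀ y₀ := by
    rw [Sym2.eq_iff] at heq
    rcases heq with ⟨rfl, rfl⟩ | ⟨rfl, rfl⟩
    · exact hcd
    · exact caredEdge_symm hcd
  obtain ⟨hpath, hfe⟩ := (Walk.cons_isCycle_iff p h₀).mp hcyc
  have he₀c : s(x₀, y₀) ∈ c.edges := (hedges _).mp (by simp)
  have hpe : ∀ e ∈ p.edges, e ∈ c.edges := fun e hee =>
    (hedges e).mp (by rw [Walk.edges_cons]; exact List.mem_cons_of_mem _ hee)
  have hps : ∀ v ∈ p.support, v ∈ c.support := fun v hv =>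
    (hsupps v).mp (by rw [Walk.support_cons]; exact List.mem_cons_of_mem _ hv)
  obtain ⟨q, hnd, hlenq, hsuppq, hedgeq⟩ := build hD hH p hpath hpe hps
  obtain ⟨hne₀, w₀, hxw, hyw⟩ := hcd₀.1
  have hw₀W : w₀ ∈ Wset A c := ⟨x₀, y₀, he₀c, hcd₀, hxw, hyw⟩
  have hw₀nc : w₀ ∉ c.support := W_not_hole hD hH hw₀W
  have hx₀c : x₀ ∈ c.support := Walk.fst_mem_support_of_mem_edges c he₀c
  have hy₀c : y₀ ∈ c.support := Walk.snd_mem_support_of_mem_edges c he₀c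
  have hw₀q : w₀ ∉ q.support := by
    intro hmem
    rcases hsuppq w₀ hmem with h1 | ⟨-, x1, y1, he1, hc1, hx1, hy1⟩
    · exact hw₀nc (hps w₀ h1)
    · have h1 : x1 = x₀ ∨ x1 = y₀ := by
        by_contra hcon; push_neg at hcon
        exact threeIn hD hx1 hxw hyw hcon.1 hcon.2 hne₀
      have h2 : y1 = x₀ ∨ y1 = y₀ := by
        by_contra hcon; push_neg at hcon
        exact threeIn hD hy1 hxw hyw hcon.1 hcon.2 hne₀
      have hx1y1 : x1 ≠ y1 := hc1.1.1
      have heq1 : s(x1, y1) = s(x₀, y₀) := by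
        rcases h1 with rfl | rfl <;> rcases h2 with rfl | rfl
        · exact absurd rfl hx1y1
        · rfl
        · exact Sym2.eq_swap
        · exact absurd rfl hx1y1
      exact hfe (heq1 ▸ he1)
  have hadj1 : (underlyingGraph A).Adj x₀ w₀ := U_of_arc hD hxw
  have hadj2 : (underlyingGraph A).Adj w₀ y₀ := (U_of_arc hD hyw).symm
  refine ⟨x₀, Walk.cons hadj1 (Walk.cons hadj2 q), ?_, ?_, ?_⟩
  · rw [Walk.cons_isCycle_iff]
    constructor
    · rw [Walk.cons_isPath_iff]
      exact ⟨(Walk.isPath_def q).mpr hnd, hw₀q⟩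
    · rw [Walk.edges_cons, List.mem_cons]
      rintro (hc1 | hc1)
      · rw [Sym2.eq_iff] at hc1
        rcases hc1 with ⟨-, h1⟩ | ⟨h1, -⟩
        · exact hw₀nc (h1 ▸ hy₀c)
        · exact hne₀ h1
      · rcases hedgeq _ hc1 with h1 | ⟨z, w', hew, hw'nc, hw'q⟩
        · exact hw₀nc (hps w₀ (Walk.snd_mem_support_of_mem_edges p h1))
        · rw [Sym2.eq_iff] at hew
          rcases hew with ⟨-, h2⟩ | ⟨h2, -⟩
          · exact hw₀q (h2 ▸ hw'q)
          · exact hw'nc (h2 ▸ hx₀c)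
  · have h4 : 4 ≤ c.length := hH.2.1
    rw [Walk.length_cons] at hlen
    simp only [Walk.length_cons]
    omega
  · intro v hv
    rw [Walk.support_cons, Walk.support_cons, List.mem_cons, List.mem_cons] at hv
    rcases hv with rfl | rfl | hv
    · exact Or.inl hx₀c
    · exact Or.inr hw₀W
    · rcases hsuppq v hv with h1 | ⟨h1, x1, y1, he1, hc1, hx1, hy1⟩
      · exact Or.inl (hps v h1)
      · exact Or.inr ⟨x1, y1, hpe _ he1, hc1, hx1, hy1⟩

set_option maxHeartbeats 2000000 in
/-- A 5-cycle on `S` with a chord yields a hole on `S` (contradiction form). -/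
lemma case5 (hD : IsIJDigraph 2 2 A) (hH : IsHole (phylogenyGraph A) c)
    {z : V} {Z : (underlyingGraph A).Walk z z} (hZ : Z.IsCycle)
    (hlen : Z.length = 5) (hsupp : ∀ v ∈ Z.support, v ∈ Sset A c)
    {x y : V} (hx : x ∈ Z.support) (hy : y ∈ Z.support)
    (hxy : (underlyingGraph A).Adj x y) (hch : s(x, y) ∉ Z.edges)
    (hno : ¬ ∃ (z' : V) (Y : (underlyingGraph A).Walk z' z'),
      IsHole (underlyingGraph A) Y ∧ ∀ v ∈ Y.support, v ∈ Sset A c) : False := by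
  have hrot : (Z.rotate _ hx).IsCycle := hZ.rotate hx
  have hlen' : (Z.rotate _ hx).length = 5 := by rw [length_rotate]; exact hlen
  have hsupp' : ∀ v ∈ (Z.rotate _ hx).support, v ∈ Sset A c := fun v hv =>
    hsupp v ((mem_support_rotate_iff Z hZ hx).mp hv)
  have hch' : s(x, y) ∉ (Z.rotate _ hx).edges := fun hmem =>
    hch ((mem_edges_rotate_iff Z hx _).mp hmem)
  have hy' : y ∈ (Z.rotate _ hx).support := (mem_support_rotate_iff Z hZ hx).mpr hy
  obtain ⟨s₀, h₀, p, hps⟩ := Walk.not_nil_iff.mp hrot.not_nil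
  rw [hps] at hrot hlen' hsupp' hch' hy'
  obtain ⟨hpath, hfe⟩ := (Walk.cons_isCycle_iff p h₀).mp hrot
  rw [Walk.length_cons] at hlen'
  obtain ⟨a₁, a₂, a₃, k₁, k₂, k₃, k₄, rfl⟩ := walk_four p (by omega)
  -- distinctness
  have hnd := hpath.support_nodup
  simp only [Walk.support_cons, Walk.support_nil, List.nodup_cons, List.mem_cons,
    List.mem_singleton, List.not_mem_nil, or_false, not_or, List.nodup_nil, and_true] at hnd
  obtain ⟨⟨hs0a1', hs0a2', hs0a3', hs0x'⟩, ⟨ha1a2', ha1a3', ha1x'⟩, ⟨ha2a3', ha2x'⟩,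
    ha3x', -⟩ := hnd
  have hs0a1 : s₀ ≠ a₁ := hs0a1'
  have hs0a2 : s₀ ≠ a₂ := hs0a2'
  have hs0a3 : s₀ ≠ a₃ := hs0a3'
  have ha1a2 : a₁ ≠ a₂ := ha1a2'
  have ha1a3 : a₁ ≠ a₃ := ha1a3'
  have ha1x : a₁ ≠ x := ha1x'
  have ha2a3 : a₂ ≠ a₃ := ha2a3'
  have ha2x : a₂ ≠ x := ha2x'
  have ha3x : a₃ ≠ x := ha3x'
  have hxs0 : x ≠ s₀ := h₀.ne
  -- memberships in S
  have hSx : x ∈ Sset A c := hsupp' x (by simp [Walk.support_cons])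
  have hSs0 : s₀ ∈ Sset A c := hsupp' s₀ (by simp [Walk.support_cons])
  have hSa1 : a₁ ∈ Sset A c := hsupp' a₁ (by simp [Walk.support_cons])
  have hSa2 : a₂ ∈ Sset A c := hsupp' a₂ (by simp [Walk.support_cons])
  have hSa3 : a₃ ∈ Sset A c := hsupp' a₃ (by simp [Walk.support_cons])
  -- locate y
  have hys0 : y ≠ s₀ := by
    rintro rfl
    exact hch' (by simp [Walk.edges_cons])
  have hya3 : y ≠ a₃ := by
    rintro rfl
    exact hch' (by rw [Sym2.eq_swap]; simp [Walk.edges_cons])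
  have hyx : y ≠ x := hxy.ne'
  have hy5 : y = a₁ ∨ y = a₂ := by
    simp only [Walk.support_cons, Walk.support_nil, List.mem_cons, List.mem_singleton,
      List.not_mem_nil, or_false] at hy'
    rcases hy' with rfl | rfl | rfl | rfl | rfl | rfl <;> tauto
  rcases hy5 with h5 | h5
  · -- y = a₁ : square (x, a₁, a₂, a₃), extra vertex m = s₀
    rw [h5] at hxy
    by_cases g₁ : (underlyingGraph A).Adj x a₂
    · obtain ⟨w, aa, bb, dd, yy, hB, htup⟩ := bad_c4 hD hH hSx hSa1 hSa2 hSa3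
        hxy k₂ k₃ k₄ g₁ ha1a3
      rcases htup with ⟨rfl, rfl, rfl, rfl⟩ | ⟨rfl, rfl, rfl, rfl⟩ |
        ⟨rfl, rfl, rfl, rfl⟩ | ⟨rfl, rfl, rfl, rfl⟩
      · exact attach_wa hD hB hs0a1 hs0a2 hs0a3 h₀.symm k₁
      · exact attach_dw hD hB hs0a3 hs0a2 hs0a1 k₁ h₀.symm
      · exact attach_bd hD hH hB hs0a2 hs0a3 hxs0.symm hs0a1 hSs0 h₀.symm k₁
      · exact attach_ab hD hB hs0a2 hs0a1 hxs0.symm k₁ h₀.symm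
    · by_cases g₂ : (underlyingGraph A).Adj a₁ a₃
      · obtain ⟨w, aa, bb, dd, yy, hB, htup⟩ := bad_c4 hD hH hSa1 hSa2 hSa3 hSx
          k₂ k₃ k₄ hxy g₂ ha2x
        rcases htup with ⟨rfl, rfl, rfl, rfl⟩ | ⟨rfl, rfl, rfl, rfl⟩ |
          ⟨rfl, rfl, rfl, rfl⟩ | ⟨rfl, rfl, rfl, rfl⟩
        · exact attach_dw hD hB hs0a2 hs0a3 hxs0.symm h₀.symm k₁
        · exact attach_wa hD hB hxs0.symm hs0a3 hs0a2 k₁ h₀.symm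
        · exact attach_ab hD hB hs0a3 hxs0.symm hs0a1 h₀.symm k₁
        · exact attach_bd hD hH hB hs0a3 hs0a2 hs0a1 hxs0.symm hSs0 k₁ h₀.symm
      · apply hno
        refine ⟨x, Walk.cons hxy (Walk.cons k₂ (Walk.cons k₃ (Walk.cons k₄ Walk.nil))),
          hole4 hxy k₂ k₃ k₄ (Ne.symm ha2x) ha1a3 g₁ g₂, ?_⟩
        intro v hv
        simp only [Walk.support_cons, Walk.support_nil, List.mem_cons, List.mem_singleton,
          List.not_mem_nil, or_false] at hv
        rcases hv with rfl | rfl | rfl | rfl | rfl <;> assumption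
  · -- y = a₂ : square (x, s₀, a₁, a₂), extra vertex m = a₃
    rw [h5] at hxy
    by_cases g₁ : (underlyingGraph A).Adj x a₁
    · obtain ⟨w, aa, bb, dd, yy, hB, htup⟩ := bad_c4 hD hH hSx hSs0 hSa1 hSa2
        h₀ k₁ k₂ hxy.symm g₁ hs0a2
      rcases htup with ⟨rfl, rfl, rfl, rfl⟩ | ⟨rfl, rfl, rfl, rfl⟩ |
        ⟨rfl, rfl, rfl, rfl⟩ | ⟨rfl, rfl, rfl, rfl⟩
      · exact attach_dw hD hB hs0a3.symm ha1a3.symm ha2a3.symm k₃.symm k₄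
      · exact attach_wa hD hB ha2a3.symm ha1a3.symm hs0a3.symm k₄ k₃.symm
      · exact attach_ab hD hB ha1a3.symm ha2a3.symm ha3x k₃.symm k₄
      · exact attach_bd hD hH hB ha1a3.symm hs0a3.symm ha3x ha2a3.symm hSa3 k₄ k₃.symm
    · by_cases g₂ : (underlyingGraph A).Adj s₀ a₂
      · obtain ⟨w, aa, bb, dd, yy, hB, htup⟩ := bad_c4 hD hH hSs0 hSa1 hSa2 hSx
          k₁ k₂ hxy.symm h₀ g₂ ha1x
        rcases htup with ⟨rfl, rfl, rfl, rfl⟩ | ⟨rfl, rfl, rfl, rfl⟩ |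
          ⟨rfl, rfl, rfl, rfl⟩ | ⟨rfl, rfl, rfl, rfl⟩
        · exact attach_bd hD hH hB hs0a3.symm ha1a3.symm ha2a3.symm ha3x hSa3 k₃.symm k₄
        · exact attach_ab hD hB hs0a3.symm ha3x ha2a3.symm k₄ k₃.symm
        · exact attach_wa hD hB ha3x hs0a3.symm ha1a3.symm k₃.symm k₄
        · exact attach_dw hD hB ha1a3.symm hs0a3.symm ha3x k₄ k₃.symm
      · apply hno
        refine ⟨x, Walk.cons h₀ (Walk.cons k₁ (Walk.cons k₂ (Walk.cons hxy.symm Walk.nil))),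
          hole4 h₀ k₁ k₂ hxy.symm (Ne.symm ha1x) hs0a2 g₁ g₂, ?_⟩
        intro v hv
        simp only [Walk.support_cons, Walk.support_nil, List.mem_cons, List.mem_singleton,
          List.not_mem_nil, or_false] at hv
        rcases hv with rfl | rfl | rfl | rfl | rfl <;> assumption

set_option maxHeartbeats 2000000 in
/-- A 6-cycle on `S` with a chord yields a shorter cycle or hole (contradiction form). -/
lemma case6 (hD : IsIJDigraph 2 2 A) (hH : IsHole (phylogenyGraph A) c)
    {z : V} {Z : (underlyingGraph A).Walk z z} (hZ : Z.IsCycle)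
    (hlen : Z.length = 6) (hsupp : ∀ v ∈ Z.support, v ∈ Sset A c)
    {x y : V} (hx : x ∈ Z.support) (hy : y ∈ Z.support)
    (hxy : (underlyingGraph A).Adj x y) (hch : s(x, y) ∉ Z.edges)
    (no5 : ∀ (z' : V) (Z' : (underlyingGraph A).Walk z' z'), Z'.IsCycle → Z'.length = 5 →
      (∀ v ∈ Z'.support, v ∈ Sset A c) → False)
    (hno : ¬ ∃ (z' : V) (Y : (underlyingGraph A).Walk z' z'),
      IsHole (underlyingGraph A) Y ∧ ∀ v ∈ Y.support, v ∈ Sset A c) : False := by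
  have hrot : (Z.rotate _ hx).IsCycle := hZ.rotate hx
  have hlen' : (Z.rotate _ hx).length = 6 := by rw [length_rotate]; exact hlen
  have hsupp' : ∀ v ∈ (Z.rotate _ hx).support, v ∈ Sset A c := fun v hv =>
    hsupp v ((mem_support_rotate_iff Z hZ hx).mp hv)
  have hch' : s(x, y) ∉ (Z.rotate _ hx).edges := fun hmem =>
    hch ((mem_edges_rotate_iff Z hx _).mp hmem)
  have hy' : y ∈ (Z.rotate _ hx).support := (mem_support_rotate_iff Z hZ hx).mpr hy
  obtain ⟨s₀, h₀, p, hps⟩ := Walk.not_nil_iff.mp hrot.not_nil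
  rw [hps] at hrot hlen' hsupp' hch' hy'
  obtain ⟨hpath, hfe⟩ := (Walk.cons_isCycle_iff p h₀).mp hrot
  rw [Walk.length_cons] at hlen'
  obtain ⟨a₁, a₂, a₃, a₄, k₁, k₂, k₃, k₄, k₅, rfl⟩ := walk_five p (by omega)
  have hnd := hpath.support_nodup
  simp only [Walk.support_cons, Walk.support_nil, List.nodup_cons, List.mem_cons,
    List.mem_singleton, List.not_mem_nil, or_false, not_or, List.nodup_nil, and_true] at hnd
  obtain ⟨⟨hs0a1', hs0a2', hs0a3', hs0a4', hs0x'⟩, ⟨ha1a2', ha1a3', ha1a4', ha1x'⟩,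
    ⟨ha2a3', ha2a4', ha2x'⟩, ⟨ha3a4', ha3x'⟩, ha4x', -⟩ := hnd
  have hs0a2 : s₀ ≠ a₂ := hs0a2'
  have ha1x : a₁ ≠ x := ha1x'
  have ha1a3 : a₁ ≠ a₃ := ha1a3'
  have ha2x : a₂ ≠ x := ha2x'
  have hxs0 : x ≠ s₀ := h₀.ne
  have hSsub : ∀ v, v = x ∨ v = s₀ ∨ v = a₁ ∨ v = a₂ ∨ v = a₃ ∨ v = a₄ → v ∈ Sset A c := by
    intro v hv
    apply hsupp' v
    rcases hv with rfl | rfl | rfl | rfl | rfl | rfl <;> simp [Walk.support_cons]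
  -- locate y
  have hys0 : y ≠ s₀ := by
    rintro rfl
    exact hch' (by simp [Walk.edges_cons])
  have hya4 : y ≠ a₄ := by
    rintro rfl
    exact hch' (by rw [Sym2.eq_swap]; simp [Walk.edges_cons])
  have hyx : y ≠ x := hxy.ne'
  have hy6 : y = a₁ ∨ y = a₂ ∨ y = a₃ := by
    simp only [Walk.support_cons, Walk.support_nil, List.mem_cons, List.mem_singleton,
      List.not_mem_nil, or_false] at hy'
    rcases hy' with rfl | rfl | rfl | rfl | rfl | rfl | rfl <;> tauto
  rcases hy6 with h5 | h5 | h5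
  · -- y = a₁ : drop s₀, 5-cycle (x, a₁, a₂, a₃, a₄)
    rw [h5] at hxy
    apply no5 x (Walk.cons hxy (Walk.cons k₂ (Walk.cons k₃ (Walk.cons k₄
      (Walk.cons k₅ Walk.nil)))))
    · rw [Walk.cons_isCycle_iff]
      refine ⟨(hpath.of_cons), ?_⟩
      simp only [Walk.edges_cons, Walk.edges_nil, List.mem_cons, List.not_mem_nil, or_false,
        not_or]
      exact ⟨sym2_ne (fun h _ => hxy.ne h) (fun h _ => ha2x h.symm),
        sym2_ne (fun h _ => ha2x h.symm) (fun _ h2 => ha1a2' h2),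
        sym2_ne (fun h _ => ha3x' h.symm) (fun _ h2 => ha1a3' h2),
        sym2_ne (fun _ h2 => ha1x' h2) (fun _ h2 => ha1a4' h2)⟩
    · simp [Walk.length_cons]
    · intro v hv
      simp only [Walk.support_cons, Walk.support_nil, List.mem_cons, List.mem_singleton,
        List.not_mem_nil, or_false] at hv
      apply hSsub v
      tauto
  · -- y = a₂ : squares (x,s₀,a₁,a₂) and (x,a₂,a₃,a₄)
    rw [h5] at hxy
    by_cases g₁ : (underlyingGraph A).Adj x a₁
    · -- 5-cycle (x, a₁, a₂, a₃, a₄)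
      apply no5 x (Walk.cons g₁ (Walk.cons k₂ (Walk.cons k₃ (Walk.cons k₄
        (Walk.cons k₅ Walk.nil)))))
      · rw [Walk.cons_isCycle_iff]
        refine ⟨(hpath.of_cons), ?_⟩
        simp only [Walk.edges_cons, Walk.edges_nil, List.mem_cons, List.not_mem_nil, or_false,
          not_or]
        exact ⟨sym2_ne (fun h _ => g₁.ne h) (fun h _ => ha2x h.symm),
          sym2_ne (fun h _ => ha2x h.symm) (fun _ h2 => ha1a2' h2),
          sym2_ne (fun h _ => ha3x' h.symm) (fun _ h2 => ha1a3' h2),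
          sym2_ne (fun _ h2 => ha1x' h2) (fun _ h2 => ha1a4' h2)⟩
      · simp [Walk.length_cons]
      · intro v hv
        simp only [Walk.support_cons, Walk.support_nil, List.mem_cons, List.mem_singleton,
          List.not_mem_nil, or_false] at hv
        apply hSsub v
        tauto
    · by_cases g₂ : (underlyingGraph A).Adj s₀ a₂
      · -- 5-cycle (x, s₀, a₂, a₃, a₄)
        apply no5 x (Walk.cons h₀ (Walk.cons g₂ (Walk.cons k₃ (Walk.cons k₄
          (Walk.cons k₅ Walk.nil)))))
        · rw [Walk.cons_isCycle_iff]
          constructor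
          · rw [Walk.isPath_def]
            simp only [Walk.support_cons, Walk.support_nil, List.nodup_cons, List.mem_cons,
              List.mem_singleton, List.not_mem_nil, or_false, not_or, List.nodup_nil, and_true]
            exact ⟨⟨hs0a2', hs0a3', hs0a4', hs0x'⟩, ⟨ha2a3', ha2a4', ha2x'⟩,
              ⟨ha3a4', ha3x'⟩, ha4x', not_false⟩
          · simp only [Walk.edges_cons, Walk.edges_nil, List.mem_cons, List.not_mem_nil,
              or_false, not_or]
            exact ⟨sym2_ne (fun h _ => hxs0 h) (fun h _ => ha2x h.symm),
              sym2_ne (fun h _ => ha2x h.symm) (fun _ h2 => hs0a2' h2),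
              sym2_ne (fun h _ => ha3x' h.symm) (fun _ h2 => hs0a3' h2),
              sym2_ne (fun h _ => ha4x' h.symm) (fun _ h2 => hs0a4' h2)⟩
        · simp [Walk.length_cons]
        · intro v hv
          simp only [Walk.support_cons, Walk.support_nil, List.mem_cons, List.mem_singleton,
            List.not_mem_nil, or_false] at hv
          apply hSsub v
          tauto
      · -- chordless square (x, s₀, a₁, a₂)
        apply hno
        refine ⟨x, Walk.cons h₀ (Walk.cons k₁ (Walk.cons k₂ (Walk.cons hxy.symm Walk.nil))),
          hole4 h₀ k₁ k₂ hxy.symm (Ne.symm ha1x) hs0a2 g₁ g₂, ?_⟩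
        intro v hv
        simp only [Walk.support_cons, Walk.support_nil, List.mem_cons, List.mem_singleton,
          List.not_mem_nil, or_false] at hv
        apply hSsub v
        tauto
  · -- y = a₃ : 5-cycle (x, s₀, a₁, a₂, a₃)
    rw [h5] at hxy
    apply no5 x (Walk.cons h₀ (Walk.cons k₁ (Walk.cons k₂ (Walk.cons k₃
      (Walk.cons hxy.symm Walk.nil)))))
    · rw [Walk.cons_isCycle_iff]
      constructor
      · rw [Walk.isPath_def]
        simp only [Walk.support_cons, Walk.support_nil, List.nodup_cons, List.mem_cons,
          List.mem_singleton, List.not_mem_nil, or_false, not_or, List.nodup_nil, and_true]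
        exact ⟨⟨hs0a1', hs0a2', hs0a3', hs0x'⟩, ⟨ha1a2', ha1a3', ha1x'⟩,
          ⟨ha2a3', ha2x'⟩, ha3x', not_false⟩
      · simp only [Walk.edges_cons, Walk.edges_nil, List.mem_cons, List.not_mem_nil,
          or_false, not_or]
        exact ⟨sym2_ne (fun h _ => hxs0 h) (fun h _ => ha1x h.symm),
          sym2_ne (fun h _ => ha1x h.symm) (fun _ h2 => hs0a1' h2),
          sym2_ne (fun h _ => ha2x h.symm) (fun _ h2 => hs0a2' h2),
          sym2_ne (fun h _ => ha3x' h.symm) (fun _ h2 => hs0a3' h2)⟩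
    · simp [Walk.length_cons]
    · intro v hv
      simp only [Walk.support_cons, Walk.support_nil, List.mem_cons, List.mem_singleton,
        List.not_mem_nil, or_false] at hv
      apply hSsub v
      tauto

/-- Main lemma: a long cycle on `S` forces a hole on `S`. -/
lemma main (hD : IsIJDigraph 2 2 A) (hH : IsHole (phylogenyGraph A) c)
    (hex : ∃ (z : V) (C : (underlyingGraph A).Walk z z), C.IsCycle ∧ 5 ≤ C.length ∧
      ∀ v ∈ C.support, v ∈ Sset A c) :
    ∃ (z' : V) (Y : (underlyingGraph A).Walk z' z'),
      IsHole (underlyingGraph A) Y ∧ ∀ v ∈ Y.support, v ∈ Sset A c := by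
  by_contra hno
  obtain ⟨z, C, hC, h5, hsupp⟩ := hex
  have key : ∀ (n : ℕ) (z : V) (Z : (underlyingGraph A).Walk z z), Z.IsCycle →
      Z.length = n → 5 ≤ Z.length → (∀ v ∈ Z.support, v ∈ Sset A c) → False := by
    intro n
    induction n using Nat.strong_induction_on with
    | _ n ih =>
      intro z Z hZ hlen h5' hsupp'
      by_cases hch : ∃ x, x ∈ Z.support ∧ ∃ y, y ∈ Z.support ∧
          (underlyingGraph A).Adj x y ∧ s(x, y) ∉ Z.edges
      · obtain ⟨x, hx, y, hy, hxy, hnotin⟩ := hch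
        rcases Nat.lt_or_ge n 7 with hn | hn
        · have h56 : n = 5 ∨ n = 6 := by omega
          rcases h56 with rfl | rfl
          · exact case5 hD hH hZ hlen hsupp' hx hy hxy hnotin hno
          · exact case6 hD hH hZ hlen hsupp' hx hy hxy hnotin
              (fun z' Z' h1 h2 h3 => ih 5 (by omega) z' Z' h1 h2 (by omega) h3) hno
        · obtain ⟨WB, WA, hAc, hBc, hA3, hB3, hsum, hAsupp, hBsupp⟩ :=
            split hZ hx hy hxy hnotin
          rcases Nat.lt_or_ge WA.length 5 with hA | hA
          · have hB5 : 5 ≤ WB.length := by omega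
            exact ih WB.length (by omega) x WB hBc rfl hB5
              (fun v hv => hsupp' v (hBsupp v hv))
          · exact ih WA.length (by omega) y WA hAc rfl hA
              (fun v hv => hsupp' v (hAsupp v hv))
      · push_neg at hch
        exact hno ⟨z, Z, ⟨hZ, by omega, fun x hx y hy hadj => hch x hx y hy hadj⟩, hsupp'⟩
  exact key C.length z C hC rfl h5 hsupp

end Hole

end Stmt14

/-- Let `D` be a `(2,2)` digraph and `H` a hole of the phylogeny graph of `D`.
Then there exists a hole in the underlying graph of `D` such that: if `H` is itself a
hole of the underlying graph (i.e. all edges of `H` lie in the underlying graph), this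
hole equals `H` (same edges, hence the same cycle); otherwise, this hole contains only
vertices of `V(H) ∪ W` for some set `W` extending `H`. -/
theorem stmt_14 {V : Type*} [Fintype V] (A : V → V → Prop)
    (hD : IsIJDigraph 2 2 A)
    (u : V) (c : (phylogenyGraph A).Walk u u) (hH : IsHole (phylogenyGraph A) c) :
    ∃ (u' : V) (c' : (underlyingGraph A).Walk u' u'),
      IsHole (underlyingGraph A) c' ∧
      ((∀ e ∈ c.edges, e ∈ (underlyingGraph A).edgeSet) →
        ∀ e : Sym2 V, e ∈ c'.edges ↔ e ∈ c.edges) ∧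
      (¬ (∀ e ∈ c.edges, e ∈ (underlyingGraph A).edgeSet) →
        ∃ W : Set V, ExtendingSet A c W ∧
          ∀ x ∈ c'.support, x ∈ c.support ∨ x ∈ W) := by
  classical
  by_cases hall : ∀ e ∈ c.edges, e ∈ (underlyingGraph A).edgeSet
  · refine ⟨u, c.transfer (underlyingGraph A) hall, ?_, ?_, ?_⟩
    · obtain ⟨hc, hlen, hind⟩ := hH
      refine ⟨hc.transfer hall, ?_, ?_⟩
      · rw [SimpleGraph.Walk.length_transfer]; exact hlen
      · intro x hx y hy hadj
        rw [SimpleGraph.Walk.edges_transfer]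
        rw [SimpleGraph.Walk.support_transfer] at hx hy
        exact hind x hx y hy (Stmt14.P_of_U hadj)
    · intro _ e
      rw [SimpleGraph.Walk.edges_transfer]
    · intro hcon
      exact absurd hall hcon
  · have hcared : ∃ x y, s(x, y) ∈ c.edges ∧ CaredEdge A x y := by
      push_neg at hall
      obtain ⟨e, he, hnot⟩ := hall
      induction e using Sym2.ind with
      | _ x y =>
        have hnotU : ¬ (underlyingGraph A).Adj x y :=
          fun h => hnot (((underlyingGraph A).mem_edgeSet).mpr h)
        have hP : (phylogenyGraph A).Adj x y := SimpleGraph.Walk.adj_of_mem_edges c he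
        rw [phylogenyGraph, SimpleGraph.sup_adj] at hP
        rcases hP with h | h
        · exact absurd h hnotU
        · exact ⟨x, y, he, h, hnotU⟩
    obtain ⟨z', Y, hYhole, hYsupp⟩ := Stmt14.main hD hH (Stmt14.exists_C hD hH hcared)
    refine ⟨z', Y, hYhole, ?_, ?_⟩
    · intro hcon; exact absurd hcon hall
    · intro _
      refine ⟨Stmt14.Wset A c, ⟨fun w hw => hw, ?_⟩, ?_⟩
      · intro x y he hcd
        obtain ⟨hne, w, hxw, hyw⟩ := hcd.1
        exact ⟨w, ⟨x, y, he, hcd, hxw, hyw⟩, hxw, hyw⟩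
      · intro v hv
        rcases hYsupp v hv with h | h
        · exact Or.inl h
        · exact Or.inr h
end
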